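/- arXiv:math/9909197 — 6 statements merged into one kernel-verified Lean document; each statement's English description precedes it below -/
import Mathlib

section
/- Let μ be a doubling Radon measure on ℝ^{n+1} which is asymptotically optimally doubling. Suppose Q_i ∈ spt μ with Q_i → Q ∈ spt μ, λ_i > 0 with λ_i → 0, and the rescaled measures μ_{λ_i,Q_i} converge weakly to a nonzero Radon measure ν. Then ν is a uniform measure with exponent n: for every X ∈ spt ν and every r > 0, ν(B(r,X)) = r^n. -/
open MeasureTheory Metric Filter
open scoped ENNReal Topology

noncomputable section

/-- The support of a measure on ℝ^{n+1}: points all of whose balls have positive measure. -/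
def msupp {n : ℕ} (μ : Measure (EuclideanSpace ℝ (Fin (n+1)))) :
    Set (EuclideanSpace ℝ (Fin (n+1))) :=
  {x | ∀ r : ℝ, 0 < r → 0 < μ (ball x r)}

/-- The rescaled measure `μ_{r,Q}(A) = μ(rA + Q) / μ(B(r,Q))`. -/
def resc {n : ℕ} (μ : Measure (EuclideanSpace ℝ (Fin (n+1)))) (r : ℝ)
    (Q : EuclideanSpace ℝ (Fin (n+1))) : Measure (EuclideanSpace ℝ (Fin (n+1))) :=
  (μ (ball Q r))⁻¹ • Measure.map (fun y => r⁻¹ • (y - Q)) μ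

lemma exists_msupp_of_pos {n : ℕ} (μ : Measure (EuclideanSpace ℝ (Fin (n+1))))
    {p : EuclideanSpace ℝ (Fin (n+1))} {ρ : ℝ} (h : 0 < μ (ball p ρ)) :
    ∃ z ∈ ball p ρ, z ∈ msupp μ := by
  by_contra hc
  push_neg at hc
  have h0 : μ (ball p ρ) = 0 := by
    apply measure_null_of_locally_null
    intro z hz
    have := hc z hz
    simp only [msupp, Set.mem_setOf_eq] at this
    push_neg at this
    obtain ⟨r, hr, hr0⟩ := this
    exact ⟨ball z r, mem_nhdsWithin_of_mem_nhds (ball_mem_nhds z hr), le_antisymm hr0 (zero_le)⟩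
  rw [h0] at h; exact lt_irrefl _ h

lemma resc_apply_ball {n : ℕ} (μ : Measure (EuclideanSpace ℝ (Fin (n+1)))) {r : ℝ} (hr : 0 < r)
    (Qc X : EuclideanSpace ℝ (Fin (n+1))) (c : ℝ) :
    resc μ r Qc (ball X c) = (μ (ball Qc r))⁻¹ * μ (ball (Qc + r • X) (r * c)) := by
  have hmeas : Measurable (fun y : EuclideanSpace ℝ (Fin (n+1)) => r⁻¹ • (y - Qc)) :=
    (by fun_prop : Continuous fun y : EuclideanSpace ℝ (Fin (n+1)) => r⁻¹ • (y - Qc)).measurable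
  rw [resc, Measure.smul_apply, Measure.map_apply hmeas measurableSet_ball, smul_eq_mul]
  congr 2
  ext y
  simp only [Set.mem_preimage, mem_ball]
  have hv : r⁻¹ • (y - Qc) - X = r⁻¹ • (y - (Qc + r • X)) := by
    have h1 : r⁻¹ • (r • X) = X := by rw [smul_smul, inv_mul_cancel₀ hr.ne', one_smul]
    rw [sub_add_eq_sub_sub, smul_sub r⁻¹ (y - Qc) (r • X), h1]
  rw [dist_eq_norm, dist_eq_norm, hv, norm_smul, Real.norm_eq_abs,
    abs_of_pos (inv_pos.2 hr)]
  rw [inv_mul_lt_iff₀ hr]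

lemma resc_finiteOnCompacts' {n : ℕ} (μ : Measure (EuclideanSpace ℝ (Fin (n+1))))
    [IsLocallyFiniteMeasure μ] {r : ℝ} (hr : 0 < r) (Qc : EuclideanSpace ℝ (Fin (n+1)))
    (hQc : μ (ball Qc r) ≠ 0) :
    IsFiniteMeasureOnCompacts ((μ (ball Qc r))⁻¹ • Measure.map (fun y => r⁻¹ • (y - Qc)) μ) := by
  constructor
  intro K hK
  have hmeas : Measurable (fun y : EuclideanSpace ℝ (Fin (n+1)) => r⁻¹ • (y - Qc)) :=
    (by fun_prop : Continuous fun y : EuclideanSpace ℝ (Fin (n+1)) => r⁻¹ • (y - Qc)).measurable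
  rw [Measure.smul_apply, Measure.map_apply hmeas hK.measurableSet, smul_eq_mul]
  have h2 : (fun y : EuclideanSpace ℝ (Fin (n+1)) => r⁻¹ • (y - Qc)) ⁻¹' K
      ⊆ (fun x : EuclideanSpace ℝ (Fin (n+1)) => r • x + Qc) '' K := by
    intro y hy
    refine ⟨r⁻¹ • (y - Qc), hy, ?_⟩
    show r • (r⁻¹ • (y - Qc)) + Qc = y
    rw [smul_smul, mul_inv_cancel₀ hr.ne', one_smul, sub_add_cancel]
  have h3 : IsCompact ((fun x : EuclideanSpace ℝ (Fin (n+1)) => r • x + Qc) '' K) :=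
    hK.image (by fun_prop)
  exact ENNReal.mul_lt_top (ENNReal.inv_lt_top.2 (pos_iff_ne_zero.2 hQc))
    ((measure_mono h2).trans_lt h3.measure_lt_top)

lemma exists_bump {n : ℕ} (X : EuclideanSpace ℝ (Fin (n+1))) {a b : ℝ} (hab : a < b) :
    ∃ φ : EuclideanSpace ℝ (Fin (n+1)) → ℝ, Continuous φ ∧ HasCompactSupport φ ∧
      (∀ y, φ y ∈ Set.Icc (0:ℝ) 1) ∧ (∀ y ∈ closedBall X a, φ y = 1) ∧
      (∀ y ∉ ball X b, φ y = 0) := by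
  obtain ⟨f, hf1, hf0, hfs, hf01⟩ := exists_continuous_one_zero_of_isCompact
    (isCompact_closedBall X a) isOpen_ball.isClosed_compl
    (Set.disjoint_left.2 fun y hy hyc => hyc (closedBall_subset_ball hab hy))
  exact ⟨f, f.continuous, hfs, hf01, fun y hy => hf1 hy, fun y hy => hf0 hy⟩

lemma bump_integral_bounds {n : ℕ} (m : Measure (EuclideanSpace ℝ (Fin (n+1))))
    [IsFiniteMeasureOnCompacts m] {X : EuclideanSpace ℝ (Fin (n+1))} {a b : ℝ}
    {φ : EuclideanSpace ℝ (Fin (n+1)) → ℝ} (hφc : Continuous φ) (hφs : HasCompactSupport φ)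
    (h01 : ∀ y, φ y ∈ Set.Icc (0:ℝ) 1) (h1 : ∀ y ∈ closedBall X a, φ y = 1)
    (h0 : ∀ y ∉ ball X b, φ y = 0) :
    (m (closedBall X a)).toReal ≤ ∫ y, φ y ∂m ∧ ∫ y, φ y ∂m ≤ (m (ball X b)).toReal := by
  have hint : Integrable φ m := hφc.integrable_of_hasCompactSupport hφs
  have hballfin : m (ball X b) < ⊤ :=
    (measure_mono ball_subset_closedBall).trans_lt (isCompact_closedBall X b).measure_lt_top
  constructor
  · have e1 : ∫ y in closedBall X a, φ y ∂m = (m (closedBall X a)).toReal := by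
      rw [setIntegral_congr_fun measurableSet_closedBall (fun y hy => h1 y hy)]
      simp [Measure.real]
    calc (m (closedBall X a)).toReal = ∫ y in closedBall X a, φ y ∂m := e1.symm
      _ ≤ ∫ y, φ y ∂m :=
        setIntegral_le_integral hint (Filter.Eventually.of_forall fun y => (h01 y).1)
  · rw [← setIntegral_eq_integral_of_forall_compl_eq_zero (fun y hy => h0 y hy)]
    calc ∫ y in ball X b, φ y ∂m ≤ ∫ _y in ball X b, (1:ℝ) ∂m :=
          setIntegral_mono_on hint.integrableOn
            (integrableOn_const hballfin.ne) measurableSet_ball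
            (fun y _hy => (h01 y).2)
      _ = (m (ball X b)).toReal := by simp [Measure.real]

lemma resc_fin {n : ℕ} (μ : Measure (EuclideanSpace ℝ (Fin (n+1))))
    [IsLocallyFiniteMeasure μ] {r : ℝ} (hr : 0 < r) (Qc : EuclideanSpace ℝ (Fin (n+1)))
    (hQc : μ (ball Qc r) ≠ 0) : IsFiniteMeasureOnCompacts (resc μ r Qc) :=
  resc_finiteOnCompacts' μ hr Qc hQc

lemma aod_ratio_tendsto {n : ℕ} {μ : Measure (EuclideanSpace ℝ (Fin (n+1)))}
    (hAOD : ∀ K : Set (EuclideanSpace ℝ (Fin (n+1))), IsCompact K →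
      (K ∩ msupp μ).Nonempty → ∀ τ : ℝ, 0 < τ → τ ≤ 1 → ∀ ε : ℝ, 0 < ε →
        ∃ R : ℝ, 0 < R ∧ ∀ r : ℝ, 0 < r → r ≤ R → ∀ Q' ∈ K ∩ msupp μ,
          |(μ (ball Q' (τ * r))).toReal / (μ (ball Q' r)).toReal - τ ^ n| ≤ ε)
    {K : Set (EuclideanSpace ℝ (Fin (n+1)))} (hK : IsCompact K) (hne : (K ∩ msupp μ).Nonempty)
    {lam : ℕ → ℝ} (hlampos : ∀ i, 0 < lam i) (hlam : Tendsto lam atTop (𝓝 0))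
    {Z : ℕ → EuclideanSpace ℝ (Fin (n+1))} (hZ : ∀ᶠ i in atTop, Z i ∈ K ∩ msupp μ)
    {s t : ℝ} (hs : 0 < s) (hst : s ≤ t) :
    Tendsto (fun i => (μ (ball (Z i) (lam i * s))).toReal / (μ (ball (Z i) (lam i * t))).toReal)
      atTop (𝓝 ((s/t)^n)) := by
  have ht : 0 < t := hs.trans_le hst
  rw [Metric.tendsto_nhds]
  intro ε hε
  obtain ⟨R, hR, hR2⟩ := hAOD K hK hne (s/t) (div_pos hs ht) ((div_le_one ht).2 hst)
    (ε/2) (half_pos hε)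
  have hsm : Tendsto (fun i => lam i * t) atTop (𝓝 0) := by
    simpa using hlam.mul_const t
  filter_upwards [hZ, hsm.eventually (eventually_le_nhds hR)] with i hZi hle
  have h := hR2 (lam i * t) (mul_pos (hlampos i) ht) hle (Z i) hZi
  rw [show s / t * (lam i * t) = lam i * s by field_simp] at h
  rw [Real.dist_eq]
  calc |(μ (ball (Z i) (lam i * s))).toReal / (μ (ball (Z i) (lam i * t))).toReal - (s/t)^n|
      ≤ ε/2 := h
    _ < ε := half_lt_self hε

lemma near_support {n : ℕ} {μ ν : Measure (EuclideanSpace ℝ (Fin (n+1)))}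
    [IsLocallyFiniteMeasure μ] [IsLocallyFiniteMeasure ν]
    {Q : ℕ → EuclideanSpace ℝ (Fin (n+1))} (hQ : ∀ i, Q i ∈ msupp μ)
    {lam : ℕ → ℝ} (hlampos : ∀ i, 0 < lam i)
    (hweak : ∀ φ : EuclideanSpace ℝ (Fin (n+1)) → ℝ, Continuous φ → HasCompactSupport φ →
      Tendsto (fun i => ∫ y, φ y ∂(resc μ (lam i) (Q i))) atTop (𝓝 (∫ y, φ y ∂ν)))
    {X : EuclideanSpace ℝ (Fin (n+1))} (hX : X ∈ msupp ν) {δ : ℝ} (hδ : 0 < δ) :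
    ∀ᶠ i in atTop, ∃ z ∈ msupp μ, dist z (Q i + lam i • X) < lam i * δ := by
  obtain ⟨φ, hφc, hφs, h01, h1, h0⟩ := exists_bump X (show δ/2 < δ by linarith)
  have hpos : 0 < ∫ y, φ y ∂ν := by
    have hb := bump_integral_bounds ν hφc hφs h01 h1 h0
    refine lt_of_lt_of_le ?_ hb.1
    refine ENNReal.toReal_pos ?_ ?_
    · exact (lt_of_lt_of_le (hX (δ/2) (by linarith)) (measure_mono ball_subset_closedBall)).ne'
    · exact (isCompact_closedBall X (δ/2)).measure_lt_top.ne
  filter_upwards [(hweak φ hφc hφs).eventually (eventually_gt_nhds hpos)] with i hi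
  haveI := resc_fin μ (hlampos i) (Q i) (hQ i (lam i) (hlampos i)).ne'
  have hb2 := bump_integral_bounds (resc μ (lam i) (Q i)) hφc hφs h01 h1 h0
  have hpos2 : 0 < (resc μ (lam i) (Q i) (ball X δ)).toReal := lt_of_lt_of_le hi hb2.2
  have hne : μ (ball (Q i + lam i • X) (lam i * δ)) ≠ 0 := by
    intro h
    rw [resc_apply_ball μ (hlampos i), h, mul_zero] at hpos2
    simp at hpos2
  obtain ⟨z, hz1, hz2⟩ := exists_msupp_of_pos μ (pos_iff_ne_zero.2 hne)
  exact ⟨z, hz2, mem_ball.1 hz1⟩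
set_option maxHeartbeats 1000000 in
lemma key_limit {n : ℕ} {μ ν : Measure (EuclideanSpace ℝ (Fin (n+1)))}
    [IsLocallyFiniteMeasure μ] [IsLocallyFiniteMeasure ν]
    (hAOD : ∀ K : Set (EuclideanSpace ℝ (Fin (n+1))), IsCompact K →
      (K ∩ msupp μ).Nonempty → ∀ τ : ℝ, 0 < τ → τ ≤ 1 → ∀ ε : ℝ, 0 < ε →
        ∃ R : ℝ, 0 < R ∧ ∀ r : ℝ, 0 < r → r ≤ R → ∀ Q' ∈ K ∩ msupp μ,
          |(μ (ball Q' (τ * r))).toReal / (μ (ball Q' r)).toReal - τ ^ n| ≤ ε)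
    {Q : ℕ → EuclideanSpace ℝ (Fin (n+1))} (hQ : ∀ i, Q i ∈ msupp μ)
    {Q₀ : EuclideanSpace ℝ (Fin (n+1))} (hQ₀ : Q₀ ∈ msupp μ)
    (hQlim : Tendsto Q atTop (𝓝 Q₀))
    {lam : ℕ → ℝ} (hlampos : ∀ i, 0 < lam i) (hlam : Tendsto lam atTop (𝓝 0))
    (hweak : ∀ φ : EuclideanSpace ℝ (Fin (n+1)) → ℝ, Continuous φ → HasCompactSupport φ →
      Tendsto (fun i => ∫ y, φ y ∂(resc μ (lam i) (Q i))) atTop (𝓝 (∫ y, φ y ∂ν)))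
    {X : EuclideanSpace ℝ (Fin (n+1))} (hX : X ∈ msupp ν) {c : ℝ} (hc : 0 < c) :
    Tendsto (fun i => ((resc μ (lam i) (Q i)) (ball X c)).toReal) atTop (𝓝 (c ^ n)) := by
  classical
  rw [Metric.tendsto_nhds]
  intro ε hε
  -- choose a small parameter t
  have hg : Tendsto (fun u : ℝ => (c+u)^n * (1+u)^n) (𝓝[>] (0:ℝ)) (𝓝 (c^n)) := by
    have hco : Continuous (fun u : ℝ => (c+u)^n * (1+u)^n) := by continuity
    exact tendsto_nhdsWithin_of_tendsto_nhds (by simpa using hco.tendsto 0)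
  have hh : Tendsto (fun u : ℝ => (c-u)^n / (1+u)^n) (𝓝[>] (0:ℝ)) (𝓝 (c^n)) := by
    have hco : ContinuousAt (fun u : ℝ => (c-u)^n / (1+u)^n) 0 := by
      apply ContinuousAt.div (by fun_prop) (by fun_prop)
      norm_num
    exact tendsto_nhdsWithin_of_tendsto_nhds (by simpa using hco.tendsto)
  have hev : ∀ᶠ u in 𝓝[>] (0:ℝ), ((c+u)^n * (1+u)^n < c^n + ε ∧ c^n - ε < (c-u)^n/(1+u)^n)
      ∧ (u < min 1 (c/2) ∧ u ∈ Set.Ioi (0:ℝ)) := by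
    refine ((hg.eventually (eventually_lt_nhds (by linarith))).and
      (hh.eventually (eventually_gt_nhds (by linarith)))).and
      (Filter.Eventually.and ?_ self_mem_nhdsWithin)
    exact eventually_nhdsWithin_of_eventually_nhds (eventually_lt_nhds (by positivity))
  obtain ⟨t, ⟨hgt, hht⟩, htmin, ht0'⟩ := hev.exists
  have ht0 : 0 < t := ht0'
  have ht1 : t < 1 := lt_of_lt_of_le htmin (min_le_left _ _)
  have htc : t < c/2 := lt_of_lt_of_le htmin (min_le_right _ _)
  set m : ℝ := ‖X‖ + t with hm_def
  have hm : 0 < m := by positivity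
  set T : ℝ := max (m/t) (c+1) with hT_def
  have hTc : c + 1 ≤ T := le_max_right _ _
  have hT0 : 0 < T := lt_of_lt_of_le (by linarith) hTc
  have hmT : m ≤ t * T := by
    have h := le_max_left (m/t) (c+1)
    calc m = t * (m/t) := by field_simp
      _ ≤ t * T := mul_le_mul_of_nonneg_left h ht0.le
  have hKne : (closedBall Q₀ 1 ∩ msupp μ).Nonempty :=
    ⟨Q₀, mem_closedBall_self zero_le_one, hQ₀⟩
  -- nearby support points
  have hns := near_support hQ hlampos hweak hX ht0
  set Z : ℕ → EuclideanSpace ℝ (Fin (n+1)) := fun i =>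
    if h : ∃ z ∈ msupp μ, dist z (Q i + lam i • X) < lam i * t then h.choose else Q₀ with hZ_def
  have hZev : ∀ᶠ i in atTop, Z i ∈ msupp μ ∧ dist (Z i) (Q i + lam i • X) < lam i * t := by
    filter_upwards [hns] with i hi
    simp only [hZ_def, dif_pos hi]
    exact hi.choose_spec
  have hQK : ∀ᶠ i in atTop, dist (Q i) Q₀ ≤ 1/2 := by
    have hmem : Metric.closedBall Q₀ (1/2) ∈ 𝓝 Q₀ := closedBall_mem_nhds _ (by norm_num)
    filter_upwards [hQlim.eventually_mem hmem] with i hi using mem_closedBall.1 hi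
  have hlam_small : ∀ᶠ i in atTop, lam i * (T + m) ≤ 1/2 := by
    have h2 : Tendsto (fun i => lam i * (T+m)) atTop (𝓝 0) := by simpa using hlam.mul_const (T+m)
    exact h2.eventually (eventually_le_nhds (by norm_num))
  have hZQ : ∀ᶠ i in atTop, dist (Z i) (Q i) ≤ lam i * m := by
    filter_upwards [hZev] with i h1
    have hd : dist (Q i + lam i • X) (Q i) = lam i * ‖X‖ := by
      rw [dist_eq_norm, add_sub_cancel_left, norm_smul, Real.norm_eq_abs,
        abs_of_pos (hlampos i)]
    calc dist (Z i) (Q i) ≤ dist (Z i) (Q i + lam i • X) + dist (Q i + lam i • X) (Q i) :=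
          dist_triangle _ _ _
      _ ≤ lam i * t + lam i * ‖X‖ := by rw [hd]; linarith [h1.2]
      _ = lam i * m := by rw [hm_def]; ring
  have hZK : ∀ᶠ i in atTop, Z i ∈ closedBall Q₀ 1 ∩ msupp μ := by
    filter_upwards [hZev, hZQ, hQK, hlam_small] with i h1 hzq h2 h3
    refine ⟨mem_closedBall.2 ?_, h1.1⟩
    have hmm : lam i * m ≤ 1/2 := by nlinarith [(hlampos i).le]
    calc dist (Z i) Q₀ ≤ dist (Z i) (Q i) + dist (Q i) Q₀ := dist_triangle _ _ _
      _ ≤ lam i * m + 1/2 := add_le_add hzq h2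
      _ ≤ 1 := by linarith
  have hQKe : ∀ᶠ i in atTop, Q i ∈ closedBall Q₀ 1 ∩ msupp μ := by
    filter_upwards [hQK] with i h2
    exact ⟨mem_closedBall.2 (by linarith), hQ i⟩
  -- the four AOD limits
  have hKc : IsCompact (closedBall Q₀ 1) := isCompact_closedBall _ _
  have r1 := aod_ratio_tendsto hAOD hKc hKne hlampos hlam hZK
    (s := c+t) (t := T) (by linarith) (by linarith)
  have r2 := aod_ratio_tendsto hAOD hKc hKne hlampos hlam hQKe
    (s := 1) (t := T+m) one_pos (by linarith)
  have r3 := aod_ratio_tendsto hAOD hKc hKne hlampos hlam hZK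
    (s := c-t) (t := T+m) (by linarith) (by linarith)
  have r4 := aod_ratio_tendsto hAOD hKc hKne hlampos hlam hQKe
    (s := 1) (t := T) one_pos (by linarith)
  have hU := r1.div r2 (by positivity : (0:ℝ) < ((1:ℝ)/(T+m))^n).ne'
  have hV := r3.div r4 (by positivity : (0:ℝ) < ((1:ℝ)/T)^n).ne'
  have hUlt : ((c+t)/T)^n / (((1:ℝ)/(T+m))^n) < c^n + ε := by
    have e1 : ((c+t)/T)^n / (((1:ℝ)/(T+m))^n) = ((c+t) * ((T+m)/T))^n := by
      rw [← div_pow]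
      congr 1
      field_simp
    rw [e1]
    have hbase : (c+t) * ((T+m)/T) ≤ (c+t) * (1+t) := by
      apply mul_le_mul_of_nonneg_left _ (by linarith)
      rw [div_le_iff₀ hT0]; nlinarith
    calc ((c+t) * ((T+m)/T))^n ≤ ((c+t) * (1+t))^n := by
          apply pow_le_pow_left₀ (mul_nonneg (by linarith) (by positivity)) hbase
      _ = (c+t)^n * (1+t)^n := mul_pow _ _ _
      _ < c^n + ε := hgt
  have hVgt : c^n - ε < ((c-t)/(T+m))^n / (((1:ℝ)/T)^n) := by
    have e1 : ((c-t)/(T+m))^n / (((1:ℝ)/T)^n) = ((c-t) * (T/(T+m)))^n := by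
      rw [← div_pow]
      congr 1
      field_simp
    rw [e1]
    have hfrac : 1/(1+t) ≤ T/(T+m) := by
      rw [div_le_div_iff₀ (by linarith) (by linarith)]
      nlinarith
    have hbase : (c-t) * (1/(1+t)) ≤ (c-t) * (T/(T+m)) :=
      mul_le_mul_of_nonneg_left hfrac (by linarith)
    calc c^n - ε < (c-t)^n / (1+t)^n := hht
      _ = ((c-t) * (1/(1+t)))^n := by rw [mul_one_div, div_pow]
      _ ≤ ((c-t) * (T/(T+m)))^n := by
          apply pow_le_pow_left₀ (mul_nonneg (by linarith) (by positivity)) hbase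
  have huev := hU.eventually (eventually_lt_nhds hUlt)
  have hvev := hV.eventually (eventually_gt_nhds hVgt)
  -- finiteness helper
  have hfin : ∀ (p : EuclideanSpace ℝ (Fin (n+1))) (ρ : ℝ), dist p Q₀ ≤ 1 → ρ ≤ 1 →
      μ (ball p ρ) ≠ ⊤ := by
    intro p ρ h1 h2
    refine ((measure_mono ?_).trans_lt (isCompact_closedBall Q₀ 2).measure_lt_top).ne
    intro y hy
    rw [mem_ball] at hy
    rw [mem_closedBall]
    calc dist y Q₀ ≤ dist y p + dist p Q₀ := dist_triangle _ _ _
      _ ≤ 2 := by linarith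
  -- main eventual estimate
  filter_upwards [hZev, hZQ, hZK, hQKe, hQK, hlam_small, huev, hvev] with i h1 hzq hzk hqk hqk'
    hsmall hu hv
  have hli := hlampos i
  simp only [Pi.div_apply, mul_one] at hu hv
  have hlam1 : lam i ≤ 1 := by
    nlinarith [mul_nonneg hli.le (by linarith : (0:ℝ) ≤ T + m - 1)]
  have hZQ0 : dist (Z i) Q₀ ≤ 1 := mem_closedBall.1 hzk.1
  have hQQ0 : dist (Q i) Q₀ ≤ 1 := mem_closedBall.1 hqk.1
  have hctrQ0 : dist (Q i + lam i • X) Q₀ ≤ 1 := by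
    have hd : dist (Q i + lam i • X) (Q i) = lam i * ‖X‖ := by
      rw [dist_eq_norm, add_sub_cancel_left, norm_smul, Real.norm_eq_abs, abs_of_pos hli]
    have hx : lam i * ‖X‖ ≤ 1/2 := by nlinarith [norm_nonneg X, hli.le]
    calc dist (Q i + lam i • X) Q₀ ≤ dist (Q i + lam i • X) (Q i) + dist (Q i) Q₀ :=
        dist_triangle _ _ _
      _ ≤ 1 := by rw [hd]; linarith
  have hrad : ∀ s : ℝ, s ≤ T + m → lam i * s ≤ 1 := by
    intro s hs
    calc lam i * s ≤ lam i * (T+m) := mul_le_mul_of_nonneg_left hs hli.le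
      _ ≤ 1 := hsmall.trans (by norm_num)
  -- abbreviations
  set A := (μ (ball (Z i) (lam i * (c+t)))).toReal with hA
  set B := (μ (ball (Z i) (lam i * T))).toReal with hB
  set C := (μ (ball (Q i) (lam i * (T+m)))).toReal with hC
  set D := (μ (ball (Q i) (lam i))).toReal with hD
  set E := (μ (ball (Q i + lam i • X) (lam i * c))).toReal with hE
  set A' := (μ (ball (Z i) (lam i * (c-t)))).toReal with hA'
  set B' := (μ (ball (Z i) (lam i * (T+m)))).toReal with hB'
  set C' := (μ (ball (Q i) (lam i * T))).toReal with hC'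
  have hBpos : 0 < B := ENNReal.toReal_pos (hzk.2 _ (mul_pos hli hT0)).ne'
    (hfin _ _ hZQ0 (hrad T (by linarith)))
  have hCpos : 0 < C := ENNReal.toReal_pos (hqk.2 _ (mul_pos hli (by linarith))).ne'
    (hfin _ _ hQQ0 (hrad (T+m) le_rfl))
  have hDpos : 0 < D := ENNReal.toReal_pos (hQ i _ hli).ne'
    (hfin _ _ hQQ0 hlam1)
  have hB'pos : 0 < B' := ENNReal.toReal_pos (hzk.2 _ (mul_pos hli (by linarith))).ne'
    (hfin _ _ hZQ0 (hrad (T+m) le_rfl))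
  have hC'pos : 0 < C' := ENNReal.toReal_pos (hqk.2 _ (mul_pos hli hT0)).ne'
    (hfin _ _ hQQ0 (hrad T (by linarith)))
  have hA0 : 0 ≤ A := ENNReal.toReal_nonneg
  have hA'0 : 0 ≤ A' := ENNReal.toReal_nonneg
  -- inclusions
  have hEA : E ≤ A := by
    apply ENNReal.toReal_mono (hfin _ _ hZQ0 (hrad (c+t) (by linarith)))
    apply measure_mono
    intro y hy
    rw [mem_ball] at hy ⊢
    have hd := h1.2
    rw [dist_comm] at hd
    calc dist y (Z i) ≤ dist y (Q i + lam i • X) + dist (Q i + lam i • X) (Z i) :=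
        dist_triangle _ _ _
      _ < lam i * c + lam i * t := add_lt_add hy hd
      _ = lam i * (c+t) := by ring
  have hA'E : A' ≤ E := by
    apply ENNReal.toReal_mono (hfin _ _ hctrQ0 (hrad c (by linarith)))
    apply measure_mono
    intro y hy
    rw [mem_ball] at hy ⊢
    calc dist y (Q i + lam i • X) ≤ dist y (Z i) + dist (Z i) (Q i + lam i • X) :=
        dist_triangle _ _ _
      _ < lam i * (c-t) + lam i * t := add_lt_add hy h1.2
      _ = lam i * c := by ring
  have hBC : B ≤ C := by
    apply ENNReal.toReal_mono (hfin _ _ hQQ0 (hrad (T+m) le_rfl))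
    apply measure_mono
    intro y hy
    rw [mem_ball] at hy ⊢
    calc dist y (Q i) ≤ dist y (Z i) + dist (Z i) (Q i) := dist_triangle _ _ _
      _ < lam i * T + lam i * m := add_lt_add_of_lt_of_le hy hzq
      _ = lam i * (T+m) := by ring
  have hC'B' : C' ≤ B' := by
    apply ENNReal.toReal_mono (hfin _ _ hZQ0 (hrad (T+m) le_rfl))
    apply measure_mono
    intro y hy
    rw [mem_ball] at hy ⊢
    have hd : dist (Q i) (Z i) ≤ lam i * m := by rw [dist_comm]; exact hzq
    calc dist y (Z i) ≤ dist y (Q i) + dist (Q i) (Z i) := dist_triangle _ _ _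
      _ < lam i * T + lam i * m := add_lt_add_of_lt_of_le hy hd
      _ = lam i * (T+m) := by ring
  -- identify L i
  have hL : ((resc μ (lam i) (Q i)) (ball X c)).toReal = D⁻¹ * E := by
    rw [resc_apply_ball μ hli, ENNReal.toReal_mul, ENNReal.toReal_inv]
  -- upper bound
  have hupper : ((resc μ (lam i) (Q i)) (ball X c)).toReal < c^n + ε := by
    rw [hL]
    have step1 : D⁻¹ * E ≤ D⁻¹ * A :=
      mul_le_mul_of_nonneg_left hEA (inv_nonneg.2 hDpos.le)
    have step2 : D⁻¹ * A ≤ A / B / (D / C) := by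
      rw [div_div_div_comm, inv_mul_eq_div]
      rw [le_div_iff₀ (div_pos hBpos hCpos)]
      exact mul_le_of_le_one_right (div_nonneg hA0 hDpos.le)
        (div_le_one_of_le₀ hBC hCpos.le)
    linarith [hu, step1, step2]
  -- lower bound
  have hlower : c^n - ε < ((resc μ (lam i) (Q i)) (ball X c)).toReal := by
    rw [hL]
    have step2 : A' / B' / (D / C') ≤ D⁻¹ * A' := by
      rw [div_div_div_comm, inv_mul_eq_div]
      apply div_le_self (div_nonneg hA'0 hDpos.le)
      rw [le_div_iff₀ hC'pos]
      linarith
    have step1 : D⁻¹ * A' ≤ D⁻¹ * E :=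
      mul_le_mul_of_nonneg_left hA'E (inv_nonneg.2 hDpos.le)
    linarith [hv, step1, step2]
  rw [Real.dist_eq, abs_sub_lt_iff]
  constructor <;> linarith
theorem stmt2 (n : ℕ) (μ ν : Measure (EuclideanSpace ℝ (Fin (n+1))))
    [IsLocallyFiniteMeasure μ] [IsLocallyFiniteMeasure ν]
    (hdoub : ∀ K : Set (EuclideanSpace ℝ (Fin (n+1))), IsCompact K →
      ∃ C : ℝ≥0∞, 1 < C ∧ ∃ R : ℝ, 0 < R ∧ ∀ Q ∈ msupp μ ∩ K, ∀ r : ℝ, 0 < r → r ≤ R →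
        μ (ball Q (2 * r)) ≤ C * μ (ball Q r))
    -- `μ` is asymptotically optimally doubling: uniformly on compact subsets of the support,
    -- the ratios `μ(B(τr,Q))/μ(B(r,Q))` tend to `τ^n` as `r → 0`.
    (hAOD : ∀ K : Set (EuclideanSpace ℝ (Fin (n+1))), IsCompact K →
      (K ∩ msupp μ).Nonempty → ∀ τ : ℝ, 0 < τ → τ ≤ 1 → ∀ ε : ℝ, 0 < ε →
        ∃ R : ℝ, 0 < R ∧ ∀ r : ℝ, 0 < r → r ≤ R → ∀ Q' ∈ K ∩ msupp μ,
          |(μ (ball Q' (τ * r))).toReal / (μ (ball Q' r)).toReal - τ ^ n| ≤ ε)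
    (Q : ℕ → EuclideanSpace ℝ (Fin (n+1))) (hQ : ∀ i, Q i ∈ msupp μ)
    (Q₀ : EuclideanSpace ℝ (Fin (n+1))) (hQ₀ : Q₀ ∈ msupp μ)
    (hQlim : Tendsto Q atTop (𝓝 Q₀))
    (lam : ℕ → ℝ) (hlampos : ∀ i, 0 < lam i) (hlam : Tendsto lam atTop (𝓝 0))
    (hν : ν ≠ 0)
    (hweak : ∀ φ : EuclideanSpace ℝ (Fin (n+1)) → ℝ, Continuous φ → HasCompactSupport φ →
      Tendsto (fun i => ∫ y, φ y ∂(resc μ (lam i) (Q i))) atTop (𝓝 (∫ y, φ y ∂ν))) :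
    ∀ X ∈ msupp ν, ∀ r : ℝ, 0 < r → ν (ball X r) = ENNReal.ofReal (r ^ n) := by
  intro X hX r hr
  have hfin : ν (ball X r) ≠ ⊤ := ((measure_mono ball_subset_closedBall).trans_lt
    (isCompact_closedBall X r).measure_lt_top).ne
  have hub : ∀ b : ℝ, r < b → (ν (ball X r)).toReal ≤ b^n := by
    intro b hb
    obtain ⟨φ, hφc, hφs, h01, h1, h0⟩ := exists_bump X hb
    have hbd := bump_integral_bounds ν hφc hφs h01 h1 h0
    have hstep : (ν (ball X r)).toReal ≤ ∫ y, φ y ∂ν := by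
      refine le_trans ?_ hbd.1
      exact ENNReal.toReal_mono (isCompact_closedBall X r).measure_lt_top.ne
        (measure_mono ball_subset_closedBall)
    refine hstep.trans ?_
    have hk := key_limit hAOD hQ hQ₀ hQlim hlampos hlam hweak hX (lt_trans hr hb)
    refine le_of_tendsto_of_tendsto' (hweak φ hφc hφs) hk ?_
    intro i
    haveI := resc_fin μ (hlampos i) (Q i) (hQ i _ (hlampos i)).ne'
    exact (bump_integral_bounds (resc μ (lam i) (Q i)) hφc hφs h01 h1 h0).2
  have hlb : ∀ a : ℝ, 0 < a → a < r → a^n ≤ (ν (ball X r)).toReal := by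
    intro a ha har
    obtain ⟨φ, hφc, hφs, h01, h1, h0⟩ := exists_bump X har
    have hbd := bump_integral_bounds ν hφc hφs h01 h1 h0
    refine le_trans ?_ hbd.2
    have hk := key_limit hAOD hQ hQ₀ hQlim hlampos hlam hweak hX ha
    refine le_of_tendsto_of_tendsto' hk (hweak φ hφc hφs) ?_
    intro i
    haveI := resc_fin μ (hlampos i) (Q i) (hQ i _ (hlampos i)).ne'
    have h2 := (bump_integral_bounds (resc μ (lam i) (Q i)) hφc hφs h01 h1 h0).1
    refine le_trans ?_ h2
    exact ENNReal.toReal_mono (isCompact_closedBall X a).measure_lt_top.ne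
      (measure_mono ball_subset_closedBall)
  have hto : (ν (ball X r)).toReal = r^n := by
    apply le_antisymm
    · have htb : Tendsto (fun b : ℝ => b^n) (𝓝[>] r) (𝓝 (r^n)) :=
        tendsto_nhdsWithin_of_tendsto_nhds ((continuous_pow n).tendsto r)
      refine ge_of_tendsto htb ?_
      filter_upwards [self_mem_nhdsWithin] with b hb using hub b hb
    · have hta : Tendsto (fun a : ℝ => a^n) (𝓝[<] r) (𝓝 (r^n)) :=
        tendsto_nhdsWithin_of_tendsto_nhds ((continuous_pow n).tendsto r)
      refine le_of_tendsto hta ?_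
      have hev : ∀ᶠ a in 𝓝[<] r, 0 < a :=
        eventually_nhdsWithin_of_eventually_nhds (eventually_gt_nhds hr)
      filter_upwards [self_mem_nhdsWithin, hev] with a ha h0a using hlb a h0a ha
  rw [← hto, ENNReal.ofReal_toReal hfin]
end
end

section
/- Let n ≥ 3 and let 𝒞 = {(x_1,…,x_{n+1}) ∈ ℝ^{n+1} : x_4^2 = x_1^2 + x_2^2 + x_3^2} be the Kowalski–Preiss cone. Then for every n-dimensional linear subspace L of ℝ^{n+1}, the Hausdorff distance between 𝒞 ∩ B̄(1,0) and L ∩ B̄(1,0) is at least 1/√2. -/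
open Metric

noncomputable section

lemma KP_le_infDist {α : Type*} [MetricSpace α] {s : Set α} (hs : s.Nonempty) {x : α} {b : ℝ}
    (hb : 0 ≤ b) (h : ∀ y ∈ s, b ≤ dist x y) : b ≤ Metric.infDist x s := by
  rw [Metric.infDist, ← ENNReal.toReal_ofReal hb]
  refine ENNReal.toReal_mono (Metric.infEdist_ne_top hs) ?_
  rw [EMetric.le_infEdist]
  intro y hy
  rw [edist_dist]
  exact ENNReal.ofReal_le_ofReal (h y hy)

lemma KP_fin_facts (n : ℕ) (hn : 3 ≤ n) :
    ((0 : Fin (n+1)) : ℕ) = 0 ∧ ((1 : Fin (n+1)) : ℕ) = 1 ∧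
    ((2 : Fin (n+1)) : ℕ) = 2 ∧ ((3 : Fin (n+1)) : ℕ) = 3 := by
  have e1 : ((1 : Fin (n+1)) : ℕ) = 1 % (n+1) := rfl
  have e2 : ((2 : Fin (n+1)) : ℕ) = 2 % (n+1) := rfl
  have e3 : ((3 : Fin (n+1)) : ℕ) = 3 % (n+1) := rfl
  refine ⟨rfl, ?_, ?_, ?_⟩
  · rw [e1]; exact Nat.mod_eq_of_lt (by omega)
  · rw [e2]; exact Nat.mod_eq_of_lt (by omega)
  · rw [e3]; exact Nat.mod_eq_of_lt (by omega)

lemma KP_key {n : ℕ} (hn : 3 ≤ n) (a b : ℝ) (hab : a ^ 2 + b ^ 2 = 1)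
    (x : EuclideanSpace ℝ (Fin (n+1)))
    (hx : (x 3) ^ 2 = (x 0) ^ 2 + (x 1) ^ 2 + (x 2) ^ 2) :
    1 / Real.sqrt 2 ≤
      dist (a • EuclideanSpace.single (0 : Fin (n+1)) (1:ℝ)
        + b • EuclideanSpace.single (1 : Fin (n+1)) (1:ℝ)) x := by
  obtain ⟨h0, h1, h2, h3⟩ := KP_fin_facts n hn
  have ne01 : (0 : Fin (n+1)) ≠ 1 := by rw [Fin.ne_iff_vne, h0, h1]; omega
  have ne02 : (0 : Fin (n+1)) ≠ 2 := by rw [Fin.ne_iff_vne, h0, h2]; omega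
  have ne03 : (0 : Fin (n+1)) ≠ 3 := by rw [Fin.ne_iff_vne, h0, h3]; omega
  have ne12 : (1 : Fin (n+1)) ≠ 2 := by rw [Fin.ne_iff_vne, h1, h2]; omega
  have ne13 : (1 : Fin (n+1)) ≠ 3 := by rw [Fin.ne_iff_vne, h1, h3]; omega
  have ne23 : (2 : Fin (n+1)) ≠ 3 := by rw [Fin.ne_iff_vne, h2, h3]; omega
  set y : EuclideanSpace ℝ (Fin (n+1)) :=
    a • EuclideanSpace.single (0 : Fin (n+1)) (1:ℝ)
      + b • EuclideanSpace.single (1 : Fin (n+1)) (1:ℝ) with hy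
  have hy0 : y 0 = a := by simp [hy, EuclideanSpace.single_apply, ne01]
  have hy1 : y 1 = b := by simp [hy, EuclideanSpace.single_apply, ne01.symm]
  have hy2 : y 2 = 0 := by simp [hy, EuclideanSpace.single_apply, ne02.symm, ne12.symm]
  have hy3 : y 3 = 0 := by simp [hy, EuclideanSpace.single_apply, ne03.symm, ne13.symm]
  rw [EuclideanSpace.dist_eq]
  have hrw : (1:ℝ) / Real.sqrt 2 = Real.sqrt (1/2) := by
    rw [one_div, one_div, Real.sqrt_inv]
  rw [hrw]
  apply Real.sqrt_le_sqrt
  have hsub : ({0, 1, 2, 3} : Finset (Fin (n+1))) ⊆ Finset.univ := Finset.subset_univ _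
  have hsum : ∑ i ∈ ({0, 1, 2, 3} : Finset (Fin (n+1))), dist (y i) (x i) ^ 2
      ≤ ∑ i, dist (y i) (x i) ^ 2 :=
    Finset.sum_le_sum_of_subset_of_nonneg hsub (fun i _ _ => sq_nonneg _)
  refine le_trans ?_ hsum

  rw [Finset.sum_insert (by simp [ne01, ne02, ne03]),
    Finset.sum_insert (by simp [ne12, ne13]),
    Finset.sum_insert (by simp [ne23]), Finset.sum_singleton]
  simp only [Real.dist_eq, sq_abs]
  rw [hy0, hy1, hy2, hy3]
  nlinarith [sq_nonneg (a - 2 * x 0), sq_nonneg (b - 2 * x 1), sq_nonneg (x 2)]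

theorem stmt4 (n : ℕ) (hn : 3 ≤ n)
    (L : Submodule ℝ (EuclideanSpace ℝ (Fin (n+1))))
    (hL : Module.finrank ℝ L = n) :
    1 / Real.sqrt 2 ≤
      Metric.hausdorffDist
        ({x : EuclideanSpace ℝ (Fin (n+1)) |
            (x 3) ^ 2 = (x 0) ^ 2 + (x 1) ^ 2 + (x 2) ^ 2} ∩ closedBall 0 1)
        ((L : Set (EuclideanSpace ℝ (Fin (n+1)))) ∩ closedBall 0 1) := by
  classical
  set E := EuclideanSpace ℝ (Fin (n+1))
  set S : Set E := {x : E | (x 3) ^ 2 = (x 0) ^ 2 + (x 1) ^ 2 + (x 2) ^ 2} ∩ closedBall 0 1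
    with hS
  set T : Set E := (L : Set E) ∩ closedBall 0 1 with hT
  obtain ⟨h0, h1, h2, h3⟩ := KP_fin_facts n hn
  have ne01 : (0 : Fin (n+1)) ≠ 1 := by rw [Fin.ne_iff_vne, h0, h1]; omega
  have hE : Module.finrank ℝ E = n + 1 := finrank_euclideanSpace_fin
  -- get a normal vector
  have hLne : L ≠ ⊤ := by
    intro h
    rw [h, finrank_top, hE] at hL
    omega
  have hperp1 : Module.finrank ℝ Lᗮ = 1 := by
    have := Submodule.finrank_add_finrank_orthogonal L
    rw [hL, hE] at this
    omega
  have hperpne : Lᗮ ≠ ⊥ := fun h => hLne (Submodule.orthogonal_eq_bot_iff.1 h)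
  obtain ⟨v, hvL, hv0⟩ := Submodule.ne_bot_iff _ |>.1 hperpne
  have hspan : (ℝ ∙ v) = Lᗮ := by
    apply Submodule.eq_of_le_of_finrank_eq
    · rw [Submodule.span_singleton_le_iff_mem]; exact hvL
    · rw [finrank_span_singleton hv0, hperp1]
  have hmem : ∀ z : E, inner ℝ v z = (0:ℝ) → z ∈ L := by
    intro z hz
    have : z ∈ (ℝ ∙ v)ᗮ := Submodule.mem_orthogonal_singleton_iff_inner_right.2 hz
    rw [hspan, Submodule.orthogonal_orthogonal] at this
    exact this
  -- choose coefficients a b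
  obtain ⟨a, b, hab, hinner⟩ : ∃ a b : ℝ, a ^ 2 + b ^ 2 = 1 ∧ a * v 0 + b * v 1 = 0 := by
    by_cases h : v 0 = 0 ∧ v 1 = 0
    · exact ⟨1, 0, by norm_num, by rw [h.1, h.2]; ring⟩
    · have hr : (0:ℝ) < (v 0) ^ 2 + (v 1) ^ 2 := by
        rcases not_and_or.1 h with h' | h' <;> positivity
      have hrs : (0:ℝ) < Real.sqrt ((v 0) ^ 2 + (v 1) ^ 2) := Real.sqrt_pos.2 hr
      refine ⟨v 1 / Real.sqrt ((v 0) ^ 2 + (v 1) ^ 2),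
        -v 0 / Real.sqrt ((v 0) ^ 2 + (v 1) ^ 2), ?_, by field_simp; ring⟩
      rw [div_pow, div_pow, ← add_div, Real.sq_sqrt hr.le]
      field_simp
      ring
  set y : E := a • EuclideanSpace.single (0 : Fin (n+1)) (1:ℝ)
      + b • EuclideanSpace.single (1 : Fin (n+1)) (1:ℝ) with hy
  have hyL : y ∈ L := by
    apply hmem
    rw [hy, inner_add_right, real_inner_smul_right, real_inner_smul_right,
      EuclideanSpace.inner_single_right, EuclideanSpace.inner_single_right]
    simp only [map_one, one_mul, starRingEnd_apply, star_trivial]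
    linarith [hinner]
  have hynorm : ‖y‖ ≤ 1 := by
    calc ‖y‖ = Real.sqrt (∑ i, ‖y i‖ ^ 2) := EuclideanSpace.norm_eq y
    _ ≤ 1 := by
        rw [show (1:ℝ) = Real.sqrt 1 from (Real.sqrt_one).symm]
        apply Real.sqrt_le_sqrt
        have : ∑ i, ‖y i‖ ^ 2 = ∑ i ∈ ({0, 1} : Finset (Fin (n+1))), ‖y i‖ ^ 2 := by
          refine (Finset.sum_subset (Finset.subset_univ _) ?_).symm
          intro i _ hi
          simp only [Finset.mem_insert, Finset.mem_singleton, not_or] at hi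
          have : y i = 0 := by
            simp [hy, EuclideanSpace.single_apply, hi.1, hi.2]
          rw [this]; simp
        rw [this, Finset.sum_insert (by simp [ne01]), Finset.sum_singleton]
        have hy0 : y 0 = a := by simp [hy, EuclideanSpace.single_apply, ne01]
        have hy1 : y 1 = b := by simp [hy, EuclideanSpace.single_apply, ne01.symm]
        rw [hy0, hy1, Real.norm_eq_abs, Real.norm_eq_abs, sq_abs, sq_abs, hab]
  have h0S : (0 : E) ∈ S := by
    constructor
    · have hz : ∀ i : Fin (n+1), (0:E) i = 0 := fun _ => rfl
      show ((0:E) 3) ^ 2 = ((0:E) 0) ^ 2 + ((0:E) 1) ^ 2 + ((0:E) 2) ^ 2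
      rw [hz, hz, hz, hz]
      norm_num
    · simp
  have h0T : (0 : E) ∈ T := ⟨Submodule.zero_mem L, by simp⟩
  have hyT : y ∈ T := ⟨hyL, by rwa [mem_closedBall_zero_iff]⟩
  have hbdd : EMetric.hausdorffEdist S T ≠ ⊤ := by
    apply Metric.hausdorffEdist_ne_top_of_nonempty_of_bounded ⟨0, h0S⟩ ⟨0, h0T⟩
    · exact (Metric.isBounded_closedBall).subset Set.inter_subset_right
    · exact (Metric.isBounded_closedBall).subset Set.inter_subset_right
  have key : 1 / Real.sqrt 2 ≤ Metric.infDist y S := by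
    apply KP_le_infDist ⟨0, h0S⟩ (by positivity)
    intro x hxS
    exact KP_key hn a b hab x hxS.1
  calc 1 / Real.sqrt 2 ≤ Metric.infDist y S := key
  _ ≤ Metric.hausdorffDist T S :=
      Metric.infDist_le_hausdorffDist_of_mem hyT (by rwa [EMetric.hausdorffEdist_comm])
  _ = Metric.hausdorffDist S T := Metric.hausdorffDist_comm
end
end

section
/- Let n ≥ 3. Define u: ℝ^{n+1} → ℝ by u(x) = (x_1^2 + x_2^2 + x_3^2 − x_4^2)/(2√2 · ω_n · √(x_1^2 + x_2^2 + x_3^2)) on the set where (x_1,x_2,x_3) ≠ 0. Then u is harmonic on {x ∈ ℝ^{n+1} : (x_1,x_2,x_3) ≠ 0}, u > 0 on Ω = {x : x_4^2 < x_1^2+x_2^2+x_3^2}, and u = 0 on {x : x_4^2 = x_1^2+x_2^2+x_3^2, (x_1,x_2,x_3) ≠ 0}. -/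
open MeasureTheory Metric
open scoped ENNReal

noncomputable section

/-- `ω_n`: the Lebesgue volume of the unit ball in `ℝ^n`. -/
def omegaBall (n : ℕ) : ℝ := (volume (ball (0 : EuclideanSpace ℝ (Fin n)) 1)).toReal

/-- `u(x) = (x₁² + x₂² + x₃² − x₄²) / (2√2 ωₙ √(x₁² + x₂² + x₃²))`. -/
def uCone (n : ℕ) (x : EuclideanSpace ℝ (Fin (n+1))) : ℝ :=
  ((x 0) ^ 2 + (x 1) ^ 2 + (x 2) ^ 2 - (x 3) ^ 2) /
    (2 * Real.sqrt 2 * omegaBall n * Real.sqrt ((x 0) ^ 2 + (x 1) ^ 2 + (x 2) ^ 2))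

namespace SAux
variable {n : ℕ}

abbrev Em (n : ℕ) := EuclideanSpace ℝ (Fin (n+1))
def qf (n : ℕ) (x : Em n) : ℝ := x 0 ^ 2 + x 1 ^ 2 + x 2 ^ 2
def rf (n : ℕ) (x : Em n) : ℝ := Real.sqrt (qf n x)
def cc (n : ℕ) : ℝ := (2 * Real.sqrt 2 * omegaBall n)⁻¹
def hfn (n : ℕ) (x : Em n) : ℝ := qf n x - x 3 ^ 2

lemma uCone_eq (x : Em n) : uCone n x = cc n * (hfn n x * (rf n x)⁻¹) := by
  simp only [uCone, cc, hfn, qf, rf, div_eq_mul_inv, mul_inv]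
  ring

lemma qf_pos {x : Em n} (hx : qf n x ≠ 0) : 0 < qf n x :=
  lt_of_le_of_ne (by unfold qf; positivity) (Ne.symm hx)

lemma rf_pos {x : Em n} (hx : qf n x ≠ 0) : 0 < rf n x :=
  Real.sqrt_pos.2 (qf_pos hx)

lemma rf_sq {x : Em n} (hx : qf n x ≠ 0) : rf n x ^ 2 = qf n x :=
  Real.sq_sqrt (qf_pos hx).le

def pr (n : ℕ) (i : Fin (n+1)) : Em n →L[ℝ] ℝ := EuclideanSpace.proj i

def dq (n : ℕ) (x : Em n) : Em n →L[ℝ] ℝ :=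
  (2 * x 0) • pr n 0 + (2 * x 1) • pr n 1 + (2 * x 2) • pr n 2

lemma hasFDerivAt_coord (i : Fin (n+1)) (x : Em n) :
    HasFDerivAt (fun y : Em n => y i) (pr n i) x := (pr n i).hasFDerivAt

lemma hasFDerivAt_sq (i : Fin (n+1)) (x : Em n) :
    HasFDerivAt (fun y : Em n => y i ^ 2) ((2 * x i) • pr n i) x := by
  simpa [Function.comp_def] using (hasDerivAt_pow 2 (x i)).comp_hasFDerivAt x (hasFDerivAt_coord i x)

lemma hasFDerivAt_qf (x : Em n) : HasFDerivAt (qf n) (dq n x) x :=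
  ((hasFDerivAt_sq 0 x).add (hasFDerivAt_sq 1 x)).add (hasFDerivAt_sq 2 x)

lemma hasFDerivAt_rf {x : Em n} (hx : qf n x ≠ 0) :
    HasFDerivAt (rf n) ((1 / (2 * rf n x)) • dq n x) x :=
  (hasFDerivAt_qf x).sqrt hx

lemma hasFDerivAt_rinv {x : Em n} (hx : qf n x ≠ 0) :
    HasFDerivAt (fun y : Em n => (rf n y)⁻¹) ((-(1 / (2 * rf n x ^ 3))) • dq n x) x := by
  have h := (hasDerivAt_inv (rf_pos hx).ne').comp_hasFDerivAt x (hasFDerivAt_rf hx)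
  have hc : (-(rf n x ^ 2)⁻¹ * (1 / (2 * rf n x))) = -(1 / (2 * rf n x ^ 3)) := by
    have hr := (rf_pos hx).ne'
    field_simp
  rwa [smul_smul, hc] at h

def dh (n : ℕ) (x : Em n) : Em n →L[ℝ] ℝ := dq n x - (2 * x 3) • pr n 3

lemma hasFDerivAt_hfn (x : Em n) : HasFDerivAt (hfn n) (dh n x) x :=
  (hasFDerivAt_qf x).sub (hasFDerivAt_sq 3 x)

def Du (n : ℕ) (x : Em n) : Em n →L[ℝ] ℝ :=
  cc n • (hfn n x • ((-(1 / (2 * rf n x ^ 3))) • dq n x) + (rf n x)⁻¹ • dh n x)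

lemma hasFDerivAt_u {x : Em n} (hx : qf n x ≠ 0) :
    HasFDerivAt (uCone n) (Du n x) x := by
  have h := ((hasFDerivAt_hfn x).mul (hasFDerivAt_rinv hx)).const_mul (cc n)
  have he : (fun y : Em n => cc n * (hfn n y * (rf n y)⁻¹)) = uCone n :=
    funext fun y => (uCone_eq y).symm
  rw [← he]
  exact h

-- index value facts
lemma v0 : ((0 : Fin (n+1)) : ℕ) = 0 := rfl
lemma v1 (hn : 3 ≤ n) : ((1 : Fin (n+1)) : ℕ) = 1 := by
  have h : ((1 : Fin (n+1)) : ℕ) = 1 % (n+1) := rfl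
  rw [h, Nat.mod_eq_of_lt (by omega)]
lemma v2 (hn : 3 ≤ n) : ((2 : Fin (n+1)) : ℕ) = 2 := by
  have h : ((2 : Fin (n+1)) : ℕ) = 2 % (n+1) := rfl
  rw [h, Nat.mod_eq_of_lt (by omega)]
lemma v3 (hn : 3 ≤ n) : ((3 : Fin (n+1)) : ℕ) = 3 := by
  have h : ((3 : Fin (n+1)) : ℕ) = 3 % (n+1) := rfl
  rw [h, Nat.mod_eq_of_lt (by omega)]

lemma ne10 (hn : 3 ≤ n) : (1 : Fin (n+1)) ≠ 0 := Fin.ne_of_val_ne (by rw [v1 hn, v0]; omega)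
lemma ne20 (hn : 3 ≤ n) : (2 : Fin (n+1)) ≠ 0 := Fin.ne_of_val_ne (by rw [v2 hn, v0]; omega)
lemma ne21 (hn : 3 ≤ n) : (2 : Fin (n+1)) ≠ 1 := Fin.ne_of_val_ne (by rw [v2 hn, v1 hn]; omega)
lemma ne30 (hn : 3 ≤ n) : (3 : Fin (n+1)) ≠ 0 := Fin.ne_of_val_ne (by rw [v3 hn, v0]; omega)
lemma ne31 (hn : 3 ≤ n) : (3 : Fin (n+1)) ≠ 1 := Fin.ne_of_val_ne (by rw [v3 hn, v1 hn]; omega)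
lemma ne32 (hn : 3 ≤ n) : (3 : Fin (n+1)) ≠ 2 := Fin.ne_of_val_ne (by rw [v3 hn, v2 hn]; omega)

lemma sone (i : Fin (n+1)) : (EuclideanSpace.single i (1:ℝ)) i = 1 := by
  simp [EuclideanSpace.single_apply]
lemma szero {i j : Fin (n+1)} (h : j ≠ i) : (EuclideanSpace.single i (1:ℝ)) j = 0 := by
  simp [EuclideanSpace.single_apply, h]

lemma pr_apply (i : Fin (n+1)) (v : Em n) : pr n i v = v i := rfl

lemma dq_apply (x v : Em n) :
    dq n x v = 2 * x 0 * v 0 + 2 * x 1 * v 1 + 2 * x 2 * v 2 := by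
  simp [dq, pr, mul_comm]

lemma dh_apply (x v : Em n) : dh n x v = dq n x v - 2 * x 3 * v 3 := by
  simp [dh, pr, mul_comm]

lemma Du_apply (x v : Em n) :
    Du n x v = cc n * (hfn n x * (-(1 / (2 * rf n x ^ 3)) * dq n x v)
      + (rf n x)⁻¹ * dh n x v) := by
  simp [Du, mul_comm]
  ring

lemma dq_single0 (hn : 3 ≤ n) (x : Em n) :
    dq n x (EuclideanSpace.single 0 1) = 2 * x 0 := by
  rw [dq_apply, sone, szero (ne10 hn), szero (ne20 hn)]; ring
lemma dq_single1 (hn : 3 ≤ n) (x : Em n) :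
    dq n x (EuclideanSpace.single 1 1) = 2 * x 1 := by
  rw [dq_apply, sone, szero (ne10 hn).symm, szero (ne21 hn)]; ring
lemma dq_single2 (hn : 3 ≤ n) (x : Em n) :
    dq n x (EuclideanSpace.single 2 1) = 2 * x 2 := by
  rw [dq_apply, sone, szero (ne20 hn).symm, szero (ne21 hn).symm]; ring
lemma dq_single3 (hn : 3 ≤ n) (x : Em n) :
    dq n x (EuclideanSpace.single 3 1) = 0 := by
  rw [dq_apply, szero (ne30 hn).symm, szero (ne31 hn).symm, szero (ne32 hn).symm]; ring
lemma dq_single_hi (hn : 3 ≤ n) (x : Em n) {i : Fin (n+1)}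
    (h0 : i ≠ 0) (h1 : i ≠ 1) (h2 : i ≠ 2) :
    dq n x (EuclideanSpace.single i 1) = 0 := by
  rw [dq_apply, szero h0.symm, szero h1.symm, szero h2.symm]; ring

lemma continuous_qf : Continuous (qf n) :=
  (((pr n 0).continuous.pow 2).add ((pr n 1).continuous.pow 2)).add ((pr n 2).continuous.pow 2)

lemma isOpen_S : IsOpen {y : Em n | qf n y ≠ 0} :=
  isOpen_compl_iff.2 (isClosed_singleton.preimage continuous_qf)

lemma second3 (hn : 3 ≤ n) {x : Em n} (hx : qf n x ≠ 0) :
    fderiv ℝ (fun y : Em n => fderiv ℝ (uCone n) y (EuclideanSpace.single 3 1)) x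
      (EuclideanSpace.single 3 1) = cc n * -2 * (rf n x)⁻¹ := by
  have hev : (fun y : Em n => fderiv ℝ (uCone n) y (EuclideanSpace.single 3 1))
      =ᶠ[nhds x] fun y => (cc n * -2) * (y 3 * (rf n y)⁻¹) := by
    filter_upwards [isOpen_S.mem_nhds hx] with y hy
    rw [(hasFDerivAt_u hy).fderiv, Du_apply, dh_apply, dq_single3 hn, sone]
    ring
  rw [hev.fderiv_eq]
  have hg := ((hasFDerivAt_coord 3 x).mul (hasFDerivAt_rinv hx)).const_mul (cc n * -2)
  simp only [Pi.mul_apply] at hg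
  rw [hg.fderiv]
  simp only [ContinuousLinearMap.smul_apply, ContinuousLinearMap.add_apply, smul_eq_mul,
    pr_apply]
  rw [dq_single3 hn, sone]
  ring

lemma second_lo (hn : 3 ≤ n) {x : Em n} (hx : qf n x ≠ 0) (i : Fin (n+1))
    (hi : i = 0 ∨ i = 1 ∨ i = 2) :
    fderiv ℝ (fun y : Em n => fderiv ℝ (uCone n) y (EuclideanSpace.single i 1)) x
      (EuclideanSpace.single i 1) =
      cc n * (2 * (rf n x)⁻¹ - 4 * x i ^ 2 * (rf n x ^ 3)⁻¹ - hfn n x * (rf n x ^ 3)⁻¹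
        + 3 * hfn n x * x i ^ 2 * (rf n x ^ 5)⁻¹) := by
  have hdq : ∀ y : Em n, dq n y (EuclideanSpace.single i 1) = 2 * y i := by
    rcases hi with rfl | rfl | rfl
    exacts [dq_single0 hn, dq_single1 hn, dq_single2 hn]
  have h3i : (3 : Fin (n+1)) ≠ i := by
    rcases hi with rfl | rfl | rfl
    exacts [ne30 hn, ne31 hn, ne32 hn]
  have hev : (fun y : Em n => fderiv ℝ (uCone n) y (EuclideanSpace.single i 1))
      =ᶠ[nhds x] fun y =>
        cc n * (2 * (y i * (rf n y)⁻¹) - hfn n y * (y i * ((rf n y) ^ 3)⁻¹)) := by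
    filter_upwards [isOpen_S.mem_nhds hx] with y hy
    rw [(hasFDerivAt_u hy).fderiv, Du_apply, dh_apply, hdq, szero h3i]
    have hr := (rf_pos hy).ne'
    field_simp
    ring
  rw [hev.fderiv_eq]
  have hr := (rf_pos hx).ne'
  have hA := (hasFDerivAt_coord i x).mul (hasFDerivAt_rinv hx)
  have hB : HasFDerivAt (fun y : Em n => ((rf n y) ^ 3)⁻¹)
      ((-((rf n x ^ 3) ^ 2)⁻¹) • (3 * rf n x ^ 2) • (1 / (2 * rf n x)) • dq n x) x := by
    have h := (hasDerivAt_inv (pow_ne_zero 3 hr)).comp_hasFDerivAt x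
      ((hasDerivAt_pow 3 (rf n x)).comp_hasFDerivAt x (hasFDerivAt_rf hx))
    simp only [Function.comp_def] at h
    rw [show (3:ℝ) * rf n x ^ 2 = ((3:ℕ):ℝ) * rf n x ^ (3-1) by norm_num]
    exact h
  have hC := (hasFDerivAt_coord i x).mul hB
  have hD := (hasFDerivAt_hfn x).mul hC
  have hg := ((hA.const_mul 2).sub hD).const_mul (cc n)
  simp only [Pi.mul_apply, Pi.sub_apply] at hg
  rw [hg.fderiv]
  simp only [ContinuousLinearMap.smul_apply, ContinuousLinearMap.add_apply,
    ContinuousLinearMap.sub_apply, smul_eq_mul, pr_apply, Pi.mul_apply]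
  rw [hdq, dh_apply, hdq, szero h3i, sone]
  field_simp
  ring

lemma second_hi (hn : 3 ≤ n) {x : Em n} (hx : qf n x ≠ 0) (i : Fin (n+1))
    (h0 : i ≠ 0) (h1 : i ≠ 1) (h2 : i ≠ 2) (h3 : i ≠ 3) :
    fderiv ℝ (fun y : Em n => fderiv ℝ (uCone n) y (EuclideanSpace.single i 1)) x
      (EuclideanSpace.single i 1) = 0 := by
  have hev : (fun y : Em n => fderiv ℝ (uCone n) y (EuclideanSpace.single i 1))
      =ᶠ[nhds x] fun _ => (0 : ℝ) := by
    filter_upwards [isOpen_S.mem_nhds hx] with y hy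
    rw [(hasFDerivAt_u hy).fderiv, Du_apply, dh_apply, dq_single_hi hn y h0 h1 h2,
      szero h3.symm]
    ring
  rw [hev.fderiv_eq]
  simp

lemma lap (hn : 3 ≤ n) {x : Em n} (hx : qf n x ≠ 0) :
    ∑ i : Fin (n+1),
      fderiv ℝ (fun y : Em n => fderiv ℝ (uCone n) y (EuclideanSpace.single i 1)) x
        (EuclideanSpace.single i 1) = 0 := by
  classical
  set F : Fin (n+1) → ℝ := fun i =>
    fderiv ℝ (fun y : Em n => fderiv ℝ (uCone n) y (EuclideanSpace.single i 1)) x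
      (EuclideanSpace.single i 1) with hF
  have hsub : ∑ i ∈ ({0,1,2,3} : Finset (Fin (n+1))), F i = ∑ i : Fin (n+1), F i := by
    apply Finset.sum_subset (Finset.subset_univ _)
    intro i _ hi
    simp only [Finset.mem_insert, Finset.mem_singleton, not_or] at hi
    exact second_hi hn hx i hi.1 hi.2.1 hi.2.2.1 hi.2.2.2
  rw [← hsub]
  have e : ({0,1,2,3} : Finset (Fin (n+1))) = insert 0 (insert 1 (insert 2 {3})) := rfl
  rw [e, Finset.sum_insert (by
        simp only [Finset.mem_insert, Finset.mem_singleton]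
        push_neg
        exact ⟨(ne10 hn).symm, (ne20 hn).symm, (ne30 hn).symm⟩),
    Finset.sum_insert (by
        simp only [Finset.mem_insert, Finset.mem_singleton]
        push_neg
        exact ⟨(ne21 hn).symm, (ne31 hn).symm⟩),
    Finset.sum_insert (by
        simp only [Finset.mem_singleton]
        exact (ne32 hn).symm),
    Finset.sum_singleton]
  show F 0 + (F 1 + (F 2 + F 3)) = 0
  rw [hF]
  simp only
  rw [second_lo hn hx 0 (Or.inl rfl), second_lo hn hx 1 (Or.inr (Or.inl rfl)),
    second_lo hn hx 2 (Or.inr (Or.inr rfl)), second3 hn hx]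
  have hr := (rf_pos hx).ne'
  have hq : x 2 ^ 2 = rf n x ^ 2 - x 0 ^ 2 - x 1 ^ 2 := by
    have := rf_sq hx
    unfold qf at this
    linarith
  rw [hq]
  field_simp
  ring

lemma contDiff_qf : ContDiff ℝ 2 (qf n) :=
  (((pr n 0).contDiff.pow 2).add ((pr n 1).contDiff.pow 2)).add ((pr n 2).contDiff.pow 2)

lemma contDiff_hfn : ContDiff ℝ 2 (hfn n) :=
  contDiff_qf.sub ((pr n 3).contDiff.pow 2)

lemma contDiffAt_u {x : Em n} (hx : qf n x ≠ 0) : ContDiffAt ℝ 2 (uCone n) x := by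
  have he : uCone n = fun y : Em n => cc n * (hfn n y * (rf n y)⁻¹) := funext uCone_eq
  rw [he]
  exact contDiffAt_const.mul (contDiff_hfn.contDiffAt.mul
    ((contDiff_qf.contDiffAt.sqrt hx).inv (rf_pos hx).ne'))

lemma omega_pos : 0 < omegaBall n :=
  ENNReal.toReal_pos (measure_ball_pos volume 0 one_pos).ne' measure_ball_lt_top.ne

lemma u_pos (x : Em n) (h : x 3 ^ 2 < x 0 ^ 2 + x 1 ^ 2 + x 2 ^ 2) : 0 < uCone n x := by
  have hq : 0 < x 0 ^ 2 + x 1 ^ 2 + x 2 ^ 2 := lt_of_le_of_lt (sq_nonneg _) h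
  apply div_pos (by linarith)
  have h2 : (0:ℝ) < Real.sqrt 2 := Real.sqrt_pos.2 two_pos
  exact mul_pos (mul_pos (mul_pos two_pos h2) omega_pos) (Real.sqrt_pos.2 hq)

lemma u_zero (x : Em n) (h : x 3 ^ 2 = x 0 ^ 2 + x 1 ^ 2 + x 2 ^ 2) : uCone n x = 0 := by
  simp only [uCone, h, sub_self, zero_div]

end SAux

theorem stmt6 (n : ℕ) (hn : 3 ≤ n) :
    -- u is C² on the set where (x₁, x₂, x₃) ≠ 0 …
    ContDiffOn ℝ 2 (uCone n)
      {x : EuclideanSpace ℝ (Fin (n+1)) | (x 0) ^ 2 + (x 1) ^ 2 + (x 2) ^ 2 ≠ 0} ∧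
    -- … and harmonic there: the Laplacian (sum of pure second derivatives) vanishes,
    (∀ x ∈ {x : EuclideanSpace ℝ (Fin (n+1)) | (x 0) ^ 2 + (x 1) ^ 2 + (x 2) ^ 2 ≠ 0},
      ∑ i : Fin (n+1),
        fderiv ℝ (fun y => fderiv ℝ (uCone n) y (EuclideanSpace.single i 1)) x
          (EuclideanSpace.single i 1) = 0) ∧
    -- u > 0 on Ω = {x₄² < x₁² + x₂² + x₃²},
    (∀ x : EuclideanSpace ℝ (Fin (n+1)),
      (x 3) ^ 2 < (x 0) ^ 2 + (x 1) ^ 2 + (x 2) ^ 2 → 0 < uCone n x) ∧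
    -- and u = 0 on the cone minus the axis.
    (∀ x : EuclideanSpace ℝ (Fin (n+1)),
      (x 3) ^ 2 = (x 0) ^ 2 + (x 1) ^ 2 + (x 2) ^ 2 →
      (x 0) ^ 2 + (x 1) ^ 2 + (x 2) ^ 2 ≠ 0 → uCone n x = 0) := by
  refine ⟨?_, ?_, ?_, ?_⟩
  · intro x hx
    exact (SAux.contDiffAt_u hx).contDiffWithinAt
  · intro x hx
    exact SAux.lap hn hx
  · intro x h
    exact SAux.u_pos x h
  · intro x h _
    exact SAux.u_zero x h
end
end

section
/- Let n ≥ 3, let Ω = {x ∈ ℝ^{n+1} : x_4^2 < x_1^2+x_2^2+x_3^2}, and let u(x) = (x_1^2+x_2^2+x_3^2 − x_4^2)/(2√2 ω_n √(x_1^2+x_2^2+x_3^2)). Let Q ∈ ∂Ω with x_4(Q) ≠ 0, and let ν(Q) = (1/√2)·( (x_1,x_2,x_3)/ρ , −x_4/|x_4| , 0, …, 0 ) where ρ = √(x_1^2+x_2^2+x_3^2) evaluated at Q; ν(Q) is the inward unit normal to ∂Ω at Q. Then the directional derivative of u at Q in the direction ν(Q) equals 1/ω_n. -/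
open MeasureTheory Metric
open scoped ENNReal

noncomputable section

/-- The inward unit normal `ν(Q) = (1/√2)((x₁,x₂,x₃)/ρ, −x₄/|x₄|, 0, …, 0)` to the cone
`∂Ω = {x₄² = x₁² + x₂² + x₃²}` at a point `Q` with `x₄(Q) ≠ 0`, where
`ρ = √(x₁² + x₂² + x₃²)`. -/
def coneNormal (n : ℕ) (Q : EuclideanSpace ℝ (Fin (n+1))) : EuclideanSpace ℝ (Fin (n+1)) :=
  (EuclideanSpace.equiv (Fin (n+1)) ℝ).symm (fun i =>
    if (i : ℕ) < 3 then
      Q i / (Real.sqrt 2 * Real.sqrt ((Q 0) ^ 2 + (Q 1) ^ 2 + (Q 2) ^ 2))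
    else if (i : ℕ) = 3 then
      -(Q 3) / (Real.sqrt 2 * |Q 3|)
    else 0)

theorem stmt7 (n : ℕ) (hn : 3 ≤ n) (Q : EuclideanSpace ℝ (Fin (n+1)))
    (hQ : (Q 3) ^ 2 = (Q 0) ^ 2 + (Q 1) ^ 2 + (Q 2) ^ 2) (h4 : Q 3 ≠ 0) :
    fderiv ℝ (uCone n) Q (coneNormal n Q) = 1 / omegaBall n := by
  have hω : 0 < omegaBall n := by
    refine ENNReal.toReal_pos (ne_of_gt (measure_ball_pos volume 0 one_pos)) ?_
    exact measure_ball_lt_top.ne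
  set s : ℝ := (Q 0) ^ 2 + (Q 1) ^ 2 + (Q 2) ^ 2 with hsdef
  have hspos : 0 < s := by
    rw [← hQ]
    exact lt_of_le_of_ne (sq_nonneg _) (Ne.symm (pow_ne_zero 2 h4))
  have hsqrt2 : Real.sqrt 2 ≠ 0 := ne_of_gt (Real.sqrt_pos.mpr (by norm_num))
  have hρ : Real.sqrt s = |Q 3| := by rw [← hQ, Real.sqrt_sq_eq_abs]
  set P : Fin (n+1) → (EuclideanSpace ℝ (Fin (n+1)) →L[ℝ] ℝ) :=
    fun i => EuclideanSpace.proj i with hP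
  have hPapp : ∀ i (v : EuclideanSpace ℝ (Fin (n+1))), P i v = v i := fun i v => by
    rw [hP]; rfl
  have hρpos : 0 < Real.sqrt s := Real.sqrt_pos.mpr hspos
  -- projections
  have hp : ∀ i : Fin (n+1), HasFDerivAt (fun x : EuclideanSpace ℝ (Fin (n+1)) => x i)
      (P i) Q := fun i => by
    rw [hP]
    exact (EuclideanSpace.proj i : EuclideanSpace ℝ (Fin (n+1)) →L[ℝ] ℝ).hasFDerivAt
  have hsq' : ∀ i : Fin (n+1), HasFDerivAt (fun x : EuclideanSpace ℝ (Fin (n+1)) => (x i) ^ 2)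
      (((2 : ℕ) * Q i ^ 1) • P i) Q := fun i =>
    by have := (hasDerivAt_pow 2 (Q i)).comp_hasFDerivAt Q (hp i); exact this
  have hnum : HasFDerivAt (fun x : EuclideanSpace ℝ (Fin (n+1)) =>
      (x 0) ^ 2 + (x 1) ^ 2 + (x 2) ^ 2 - (x 3) ^ 2)
      (((((2:ℕ) * Q 0 ^ 1) • P 0 + ((2:ℕ) * Q 1 ^ 1) • P 1) +
        ((2:ℕ) * Q 2 ^ 1) • P 2) - ((2:ℕ) * Q 3 ^ 1) • P 3) Q := by
    exact (((hsq' 0).add (hsq' 1)).add (hsq' 2)).sub (hsq' 3)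
  have hS : HasFDerivAt (fun x : EuclideanSpace ℝ (Fin (n+1)) =>
      (x 0) ^ 2 + (x 1) ^ 2 + (x 2) ^ 2)
      ((((2:ℕ) * Q 0 ^ 1) • P 0 + ((2:ℕ) * Q 1 ^ 1) • P 1) +
        ((2:ℕ) * Q 2 ^ 1) • P 2) Q :=
    ((hsq' 0).add (hsq' 1)).add (hsq' 2)
  have hden : HasFDerivAt (fun x : EuclideanSpace ℝ (Fin (n+1)) =>
      2 * Real.sqrt 2 * omegaBall n *
        Real.sqrt ((x 0) ^ 2 + (x 1) ^ 2 + (x 2) ^ 2))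
      ((2 * Real.sqrt 2 * omegaBall n) • ((1 / (2 * Real.sqrt s)) •
        ((((2:ℕ) * Q 0 ^ 1) • P 0 + ((2:ℕ) * Q 1 ^ 1) • P 1) +
          ((2:ℕ) * Q 2 ^ 1) • P 2))) Q :=
    (hS.sqrt (ne_of_gt hspos)).const_mul _
  have hdenne : 2 * Real.sqrt 2 * omegaBall n * Real.sqrt s ≠ 0 := by
    positivity
  have hinv : HasFDerivAt (fun x : EuclideanSpace ℝ (Fin (n+1)) =>
      (2 * Real.sqrt 2 * omegaBall n *
        Real.sqrt ((x 0) ^ 2 + (x 1) ^ 2 + (x 2) ^ 2))⁻¹)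
      ((-((2 * Real.sqrt 2 * omegaBall n * Real.sqrt s) ^ 2)⁻¹) •
        ((2 * Real.sqrt 2 * omegaBall n) • ((1 / (2 * Real.sqrt s)) •
        ((((2:ℕ) * Q 0 ^ 1) • P 0 + ((2:ℕ) * Q 1 ^ 1) • P 1) +
          ((2:ℕ) * Q 2 ^ 1) • P 2)))) Q :=
    (hasDerivAt_inv hdenne).comp_hasFDerivAt Q hden
  have hrepr : uCone n = fun x : EuclideanSpace ℝ (Fin (n+1)) =>
      ((x 0) ^ 2 + (x 1) ^ 2 + (x 2) ^ 2 - (x 3) ^ 2) *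
      (2 * Real.sqrt 2 * omegaBall n *
        Real.sqrt ((x 0) ^ 2 + (x 1) ^ 2 + (x 2) ^ 2))⁻¹ := by
    funext x
    simp [uCone, div_eq_mul_inv]
  have hu : HasFDerivAt (uCone n)
      ((s - (Q 3) ^ 2) •
        ((-((2 * Real.sqrt 2 * omegaBall n * Real.sqrt s) ^ 2)⁻¹) •
        ((2 * Real.sqrt 2 * omegaBall n) • ((1 / (2 * Real.sqrt s)) •
        ((((2:ℕ) * Q 0 ^ 1) • P 0 + ((2:ℕ) * Q 1 ^ 1) • P 1) +
          ((2:ℕ) * Q 2 ^ 1) • P 2)))) +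
      (2 * Real.sqrt 2 * omegaBall n * Real.sqrt s)⁻¹ •
        (((((2:ℕ) * Q 0 ^ 1) • P 0 + ((2:ℕ) * Q 1 ^ 1) • P 1) +
          ((2:ℕ) * Q 2 ^ 1) • P 2) - ((2:ℕ) * Q 3 ^ 1) • P 3)) Q := by
    rw [hrepr]
    exact hnum.mul hinv
  rw [hu.fderiv]
  have hzero : s - (Q 3) ^ 2 = 0 := by rw [← hQ]; ring
  have hν : ∀ i : Fin (n+1), coneNormal n Q i =
      (fun j : Fin (n+1) => if (j : ℕ) < 3 then
        Q j / (Real.sqrt 2 * Real.sqrt ((Q 0) ^ 2 + (Q 1) ^ 2 + (Q 2) ^ 2))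
      else if (j : ℕ) = 3 then -(Q 3) / (Real.sqrt 2 * |Q 3|) else 0) i := fun i => rfl
  have hv0 : ((0 : Fin (n+1)) : ℕ) = 0 := rfl
  have hv1 : ((1 : Fin (n+1)) : ℕ) = 1 := by
    simp [Fin.val_one', Nat.mod_eq_of_lt (by omega : 1 < n+1)]
  have hv2 : ((2 : Fin (n+1)) : ℕ) = 2 := by
    have : ((2 : Fin (n+1)) : ℕ) = 2 % (n+1) := rfl
    rw [this, Nat.mod_eq_of_lt (by omega)]
  have hv3 : ((3 : Fin (n+1)) : ℕ) = 3 := by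
    have : ((3 : Fin (n+1)) : ℕ) = 3 % (n+1) := rfl
    rw [this, Nat.mod_eq_of_lt (by omega)]
  simp only [ContinuousLinearMap.coe_smul', ContinuousLinearMap.coe_sub',
    ContinuousLinearMap.coe_add', Pi.smul_apply, Pi.sub_apply, Pi.add_apply,
    hPapp, hzero, zero_div, zero_smul, sub_zero, smul_eq_mul]
  rw [hν 0, hν 1, hν 2, hν 3]
  simp only [hv0, hv1, hv2, hv3, ← hsdef]
  norm_num
  rw [hρ]
  have h3 : |Q 3| ≠ 0 := abs_ne_zero.mpr h4
  have hsq : Real.sqrt 2 * Real.sqrt 2 = 2 := Real.mul_self_sqrt (by norm_num)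
  have hss : s = |Q 3| ^ 2 := by rw [← hQ, sq_abs]
  field_simp
  linear_combination (-1)*hsdef + (-1)*hQ +
    ((-1)*Real.sqrt 2^2)*(sq_abs (Q 3)) +
    ((-1)*(Q 3)^2)*(Real.sq_sqrt (show (0:ℝ) ≤ 2 by norm_num))
end
end

section
/- Let ν and m be unit vectors in ℝ^{n+1} with ⟨ν, m⟩ ≥ 1/2, let Λ = ν^⊥ and L = m^⊥, and let h: Λ → ℝ be Lipschitz with Lipschitz constant at most 1/8. Then the orthogonal projection Π of ℝ^{n+1} onto L is injective on the graph 𝒢 = {p + h(p)ν : p ∈ Λ}. Moreover, for P = p + h(p)ν and Q = q + h(q)ν in 𝒢 with Π(P) = Π(Q), one has |p − q| ≤ 3|h(p) − h(q)|, which forces p = q. -/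
open scoped RealInnerProductSpace

noncomputable section

theorem stmt14 (n : ℕ) (ν m : EuclideanSpace ℝ (Fin (n+1)))
    (hν : ‖ν‖ = 1) (hm : ‖m‖ = 1) (hinner : (1 : ℝ) / 2 ≤ ⟪ν, m⟫)
    (h : (Submodule.span ℝ {ν})ᗮ → ℝ) (hlip : LipschitzWith (1/8) h) :
    -- the orthogonal projection Π onto L = m^⊥, x ↦ x − ⟨x,m⟩m, is injective on the graph 𝒢
    Set.InjOn (fun x : EuclideanSpace ℝ (Fin (n+1)) => x - ⟪x, m⟫ • m)
      {y : EuclideanSpace ℝ (Fin (n+1)) |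
        ∃ p : (Submodule.span ℝ {ν})ᗮ, y = (p : EuclideanSpace ℝ (Fin (n+1))) + h p • ν} ∧
    -- moreover, if Π(P) = Π(Q) with P, Q on the graph, then |p − q| ≤ 3|h(p) − h(q)| and p = q
    ∀ p q : (Submodule.span ℝ {ν})ᗮ,
      (((p : EuclideanSpace ℝ (Fin (n+1))) + h p • ν) -
          ⟪(p : EuclideanSpace ℝ (Fin (n+1))) + h p • ν, m⟫ • m) =
        (((q : EuclideanSpace ℝ (Fin (n+1))) + h q • ν) -
          ⟪(q : EuclideanSpace ℝ (Fin (n+1))) + h q • ν, m⟫ • m) →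
      ‖(p : EuclideanSpace ℝ (Fin (n+1))) - (q : EuclideanSpace ℝ (Fin (n+1)))‖ ≤
          3 * |h p - h q| ∧ p = q := by
  have hcore : ∀ p q : (Submodule.span ℝ {ν})ᗮ,
      (((p : EuclideanSpace ℝ (Fin (n+1))) + h p • ν) -
          ⟪(p : EuclideanSpace ℝ (Fin (n+1))) + h p • ν, m⟫ • m) =
        (((q : EuclideanSpace ℝ (Fin (n+1))) + h q • ν) -
          ⟪(q : EuclideanSpace ℝ (Fin (n+1))) + h q • ν, m⟫ • m) →
      ‖(p : EuclideanSpace ℝ (Fin (n+1))) - (q : EuclideanSpace ℝ (Fin (n+1)))‖ ≤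
          3 * |h p - h q| ∧ p = q := by
    intro p q heq
    set P : EuclideanSpace ℝ (Fin (n+1)) := (p : EuclideanSpace ℝ (Fin (n+1))) with hP
    set Q : EuclideanSpace ℝ (Fin (n+1)) := (q : EuclideanSpace ℝ (Fin (n+1))) with hQ
    set c : ℝ := ⟪P + h p • ν, m⟫ - ⟪Q + h q • ν, m⟫ with hc
    -- P - Q = c • m
    have hPQ : P - Q + (h p - h q) • ν = c • m := by
      rw [hc]
      rw [sub_eq_sub_iff_sub_eq_sub] at heq
      linear_combination (norm := module) heq
    have hνp : ⟪ν, P⟫ = 0 := p.2 ν (Submodule.subset_span (Set.mem_singleton ν))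
    have hνq : ⟪ν, Q⟫ = 0 := q.2 ν (Submodule.subset_span (Set.mem_singleton ν))
    have hνν : ⟪ν, ν⟫ = 1 := by
      rw [real_inner_self_eq_norm_sq, hν]; norm_num
    -- take inner product with ν
    have hkey : h p - h q = c * ⟪ν, m⟫ := by
      have := congrArg (fun x => ⟪ν, x⟫) hPQ
      simpa [inner_add_right, inner_sub_right, inner_smul_right, hνp, hνq, hνν, hν]
        using this
    have hinn : (0:ℝ) < ⟪ν, m⟫ := by linarith
    have habs : |c| ≤ 2 * |h p - h q| := by
      have h1 : |h p - h q| = |c| * ⟪ν, m⟫ := by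
        rw [hkey, abs_mul, abs_of_nonneg hinn.le]
      nlinarith [abs_nonneg c]
    -- norm bound
    have hnorm : ‖P - Q‖ ≤ 3 * |h p - h q| := by
      have h2 : P - Q = c • m - (h p - h q) • ν := by
        linear_combination (norm := module) hPQ
      calc ‖P - Q‖ = ‖c • m - (h p - h q) • ν‖ := by rw [h2]
        _ ≤ ‖c • m‖ + ‖(h p - h q) • ν‖ := norm_sub_le _ _
        _ = |c| + |h p - h q| := by
            rw [norm_smul, norm_smul, hm, hν, Real.norm_eq_abs, Real.norm_eq_abs]
            ring
        _ ≤ 3 * |h p - h q| := by linarith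
    refine ⟨hnorm, ?_⟩
    -- Lipschitz forces p = q
    have hlip' : |h p - h q| ≤ (1/8) * ‖P - Q‖ := by
      have := hlip.dist_le_mul p q
      have hd : dist p q = ‖P - Q‖ := by
        rw [Subtype.dist_eq, dist_eq_norm]
      rw [Real.dist_eq, hd] at this
      simpa using this
    have hz : ‖P - Q‖ = 0 := by
      have hn := norm_nonneg (P - Q)
      linarith
    have : P = Q := by rwa [← sub_eq_zero, ← norm_eq_zero]
    exact Subtype.ext this
  constructor
  · rintro x ⟨p, rfl⟩ y ⟨q, rfl⟩ hxy
    simp only at hxy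
    obtain ⟨-, rfl⟩ := hcore p q hxy
    rfl
  · exact hcore
end
end

section
/- Let Ω ⊆ ℝ^{n+1} be open, Q₀ ∈ ∂Ω, r > 0, δ ∈ (0, 1/8). Let L be an n-dimensional affine plane through Q₀ with unit normal ν, and suppose that {x + tν ∈ B(r,Q₀) : x ∈ L, t > 2δr} ⊆ Ω and {x + tν ∈ B(r,Q₀) : x ∈ L, t < −2δr} ⊆ ℝ^{n+1} ∖ Ω. Then: (i) for every x ∈ L with |x − Q₀| < r√(1 − 16δ²) there exists t with |t| ≤ 2δr and x + tν ∈ ∂Ω; consequently (ii) the orthogonal projection of ∂Ω ∩ B(r,Q₀) onto L contains the n-dimensional disk {x ∈ L : |x − Q₀| < r√(1−16δ²)}, and (iii) ℋ^n(∂Ω ∩ B(r,Q₀)) ≥ (1 − 16δ²)^{n/2} ω_n r^n. -/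
open MeasureTheory Metric
open scoped ENNReal RealInnerProductSpace

noncomputable section

/-- Hausdorff measure dominates volume on Euclidean space. -/
lemma aux_vol_le_haus (n : ℕ) (s : Set (EuclideanSpace ℝ (Fin n))) (hs : MeasurableSet s) :
    volume s ≤ μH[(n : ℝ)] s := by
  have himg : volume (((MeasurableEquiv.toLp 2 (Fin n → ℝ)).symm) '' s) = volume s := by
    rw [MeasurableEquiv.image_eq_preimage_symm]
    exact (MeasurePreserving.symm _
      (EuclideanSpace.volume_preserving_symm_measurableEquiv_toLp (Fin n))).measure_preimage
      hs.nullMeasurableSet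
  have hHpi : (μH[(n : ℝ)] : Measure (Fin n → ℝ)) = volume := by
    have := MeasureTheory.hausdorffMeasure_pi_real (ι := Fin n)
    simpa using this
  have hlip : LipschitzWith 1 (⇑((MeasurableEquiv.toLp 2 (Fin n → ℝ)).symm)) := by
    have := PiLp.lipschitzWith_ofLp 2 (fun _ : Fin n => ℝ)
    convert this using 1
    rfl
  have hle := hlip.hausdorffMeasure_image_le (d := (n : ℝ)) (by positivity) s
  simp only [ENNReal.coe_one, ENNReal.one_rpow, one_mul] at hle
  rw [← himg, ← hHpi]
  exact hle

lemma aux_ball_vol (n : ℕ) {ρ : ℝ} (hρ : 0 < ρ) :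
    ENNReal.ofReal (ρ ^ n * omegaBall n) ≤ volume (ball (0 : EuclideanSpace ℝ (Fin n)) ρ) := by
  cases n with
  | zero =>
    have h1 : (ball (0 : EuclideanSpace ℝ (Fin 0)) ρ) = Set.univ :=
      Set.eq_univ_of_forall (fun x => by simp [mem_ball, Subsingleton.elim x 0, hρ])
    have h2 : (ball (0 : EuclideanSpace ℝ (Fin 0)) 1) = Set.univ :=
      Set.eq_univ_of_forall (fun x => by simp [mem_ball, Subsingleton.elim x 0])
    simp only [h1, h2, omegaBall, pow_zero, one_mul]
    exact ENNReal.ofReal_toReal_le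
  | succ m =>
    rw [Measure.addHaar_ball _ _ hρ.le, ENNReal.ofReal_mul (by positivity)]
    rw [finrank_euclideanSpace_fin]
    exact mul_le_mul_right (by simpa [omegaBall] using ENNReal.ofReal_toReal_le) _

set_option maxHeartbeats 1000000 in
theorem stmt16 (n : ℕ) (Ω : Set (EuclideanSpace ℝ (Fin (n+1)))) (hΩ : IsOpen Ω)
    (Q₀ : EuclideanSpace ℝ (Fin (n+1))) (hQ₀ : Q₀ ∈ frontier Ω)
    (r δ : ℝ) (hr : 0 < r) (hδ : δ ∈ Set.Ioo (0 : ℝ) (1/8))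
    (ν : EuclideanSpace ℝ (Fin (n+1))) (hν : ‖ν‖ = 1)
    -- L is the n-plane through Q₀ with unit normal ν; the part of B(r,Q₀) above height 2δr
    -- lies in Ω and the part below height −2δr lies in the complement of Ω:
    (hplus : ∀ x : EuclideanSpace ℝ (Fin (n+1)), ⟪x - Q₀, ν⟫ = 0 → ∀ t : ℝ,
      2 * δ * r < t → x + t • ν ∈ ball Q₀ r → x + t • ν ∈ Ω)
    (hminus : ∀ x : EuclideanSpace ℝ (Fin (n+1)), ⟪x - Q₀, ν⟫ = 0 → ∀ t : ℝ,
      t < -(2 * δ * r) → x + t • ν ∈ ball Q₀ r → x + t • ν ∉ Ω) :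
    -- (i) each point of L close enough to Q₀ is within 2δr of the boundary in the ν direction
    (∀ x : EuclideanSpace ℝ (Fin (n+1)), ⟪x - Q₀, ν⟫ = 0 →
      ‖x - Q₀‖ < r * Real.sqrt (1 - 16 * δ ^ 2) →
      ∃ t : ℝ, |t| ≤ 2 * δ * r ∧ x + t • ν ∈ frontier Ω) ∧
    -- (ii) the projection of ∂Ω ∩ B(r,Q₀) onto L contains the corresponding disk
    ({x : EuclideanSpace ℝ (Fin (n+1)) |
        ⟪x - Q₀, ν⟫ = 0 ∧ ‖x - Q₀‖ < r * Real.sqrt (1 - 16 * δ ^ 2)} ⊆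
      (fun y => y - ⟪y - Q₀, ν⟫ • ν) '' (frontier Ω ∩ ball Q₀ r)) ∧
    -- (iii) the Hausdorff measure lower bound
    ENNReal.ofReal ((1 - 16 * δ ^ 2) ^ ((n : ℝ) / 2) * omegaBall n * r ^ n) ≤
      μH[(n : ℝ)] (frontier Ω ∩ ball Q₀ r) := by
  obtain ⟨hδ0, hδ8⟩ := hδ
  set ρ := r * Real.sqrt (1 - 16 * δ ^ 2) with hρdef
  have h16 : (0:ℝ) < 1 - 16 * δ ^ 2 := by nlinarith
  clear_value ρ
  have hρpos : 0 < ρ := by rw [hρdef]; exact mul_pos hr (Real.sqrt_pos.2 h16)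
  have hρsq : ρ ^ 2 = r ^ 2 * (1 - 16 * δ ^ 2) := by
    rw [hρdef, mul_pow, Real.sq_sqrt h16.le]
  have hδr : 0 < δ * r := mul_pos hδ0 hr
  have hνν : ⟪ν, ν⟫ = 1 := by
    rw [real_inner_self_eq_norm_sq, hν]; norm_num
  have hinner : ∀ x : EuclideanSpace ℝ (Fin (n+1)), ⟪x - Q₀, ν⟫ = 0 → ∀ t : ℝ, ⟪x + t • ν - Q₀, ν⟫ = t := by
    intro x hx t
    have h1 : x + t • ν - Q₀ = (x - Q₀) + t • ν := by abel
    rw [h1, inner_add_left, real_inner_smul_left, hx, hνν]; ring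
  have hnorm : ∀ x : EuclideanSpace ℝ (Fin (n+1)), ⟪x - Q₀, ν⟫ = 0 → ∀ t : ℝ,
      ‖x + t • ν - Q₀‖ ^ 2 = ‖x - Q₀‖ ^ 2 + t ^ 2 := by
    intro x hx t
    have h1 : x + t • ν - Q₀ = (x - Q₀) + t • ν := by abel
    rw [h1, norm_add_sq_real, real_inner_smul_right, hx, norm_smul, hν,
      Real.norm_eq_abs, mul_one, sq_abs]
    ring
  have hball : ∀ x : EuclideanSpace ℝ (Fin (n+1)), ⟪x - Q₀, ν⟫ = 0 → ‖x - Q₀‖ < ρ → ∀ t : ℝ, |t| ≤ 3 * (δ * r) →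
      x + t • ν ∈ ball Q₀ r := by
    intro x hx hxρ t ht
    rw [mem_ball_iff_norm]
    have h2 := hnorm x hx t
    have hx2 : ‖x - Q₀‖ ^ 2 < ρ ^ 2 := by nlinarith [norm_nonneg (x - Q₀)]
    have ht2 : t ^ 2 ≤ 9 * (δ * r) ^ 2 := by nlinarith [sq_abs t, abs_nonneg t]
    have hA2 : ‖x + t • ν - Q₀‖ ^ 2 < r ^ 2 := by nlinarith
    nlinarith [norm_nonneg (x + t • ν - Q₀)]
  have hbelow : ∀ y : EuclideanSpace ℝ (Fin (n+1)), y ∈ ball Q₀ r → ⟪y - Q₀, ν⟫ < -(2 * δ * r) → y ∉ closure Ω := by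
    intro y hy hyb hyc
    have hcont : Continuous fun z : EuclideanSpace ℝ (Fin (n+1)) => ⟪z - Q₀, ν⟫ :=
      Continuous.inner (by fun_prop) continuous_const
    have hWopen : IsOpen (ball Q₀ r ∩ {z : EuclideanSpace ℝ (Fin (n+1)) | ⟪z - Q₀, ν⟫ < -(2 * δ * r)}) :=
      isOpen_ball.inter (isOpen_lt hcont continuous_const)
    rcases mem_closure_iff.1 hyc _ hWopen ⟨hy, hyb⟩ with ⟨z, hzW, hzΩ⟩
    set t' := ⟪z - Q₀, ν⟫ with ht'
    have hx' : ⟪(z - t' • ν) - Q₀, ν⟫ = 0 := by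
      have h1 : (z - t' • ν) - Q₀ = (z - Q₀) - t' • ν := by abel
      rw [h1, inner_sub_left, real_inner_smul_left, hνν, ← ht']; ring
    have hzeq : (z - t' • ν) + t' • ν = z := by abel
    have := hminus (z - t' • ν) hx' t' hzW.2 (by rw [hzeq]; exact hzW.1)
    rw [hzeq] at this
    exact this hzΩ
  have part1 : ∀ x : EuclideanSpace ℝ (Fin (n+1)), ⟪x - Q₀, ν⟫ = 0 → ‖x - Q₀‖ < ρ →
      ∃ t : ℝ, |t| ≤ 2 * δ * r ∧ x + t • ν ∈ frontier Ω := by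
    intro x hx hxρ
    have hcont : Continuous fun t : ℝ => x + t • ν := by fun_prop
    have hexists : ∃ t ∈ Set.Icc (-(3*(δ*r))) (3*(δ*r)), x + t • ν ∈ frontier Ω := by
      by_contra hcon
      push_neg at hcon
      have hu : IsOpen ((fun t : ℝ => x + t • ν) ⁻¹' Ω) := hΩ.preimage hcont
      have hv : IsOpen ((fun t : ℝ => x + t • ν) ⁻¹' (closure Ω)ᶜ) :=
        isClosed_closure.isOpen_compl.preimage hcont
      have hsub : Set.Icc (-(3*(δ*r))) (3*(δ*r)) ⊆
          ((fun t : ℝ => x + t • ν) ⁻¹' Ω) ∪ ((fun t : ℝ => x + t • ν) ⁻¹' (closure Ω)ᶜ) := by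
        intro t htI
        by_cases hΩt : x + t • ν ∈ Ω
        · exact Or.inl hΩt
        · refine Or.inr fun hcl => hcon t htI ?_
          rw [hΩ.frontier_eq]
          exact ⟨hcl, hΩt⟩
      have h1 : (Set.Icc (-(3*(δ*r))) (3*(δ*r)) ∩
          ((fun t : ℝ => x + t • ν) ⁻¹' Ω)).Nonempty := by
        refine ⟨3*(δ*r), ⟨by linarith, le_refl _⟩, ?_⟩
        exact hplus x hx _ (by nlinarith) (hball x hx hxρ _ (by
          rw [abs_of_nonneg (by positivity)]))
      have h2 : (Set.Icc (-(3*(δ*r))) (3*(δ*r)) ∩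
          ((fun t : ℝ => x + t • ν) ⁻¹' (closure Ω)ᶜ)).Nonempty := by
        refine ⟨-(3*(δ*r)), ⟨le_refl _, by linarith⟩, ?_⟩
        refine hbelow _ (hball x hx hxρ _ (by rw [abs_neg, abs_of_nonneg (by positivity)])) ?_
        rw [hinner x hx]
        nlinarith
      obtain ⟨t, htI, htu, htv⟩ := isPreconnected_Icc _ _ hu hv hsub h1 h2
      exact htv (subset_closure htu)
    obtain ⟨t, htI, htf⟩ := hexists
    refine ⟨t, ?_, htf⟩
    by_contra hgt
    push_neg at hgt
    rcases lt_abs.1 hgt with h | h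
    · have hmem := hplus x hx t h (hball x hx hxρ t (by
        rw [abs_le]; exact ⟨htI.1, htI.2⟩))
      rw [hΩ.frontier_eq] at htf
      exact htf.2 hmem
    · have hmem := hball x hx hxρ t (by
        rw [abs_le]; exact ⟨htI.1, htI.2⟩)
      refine hbelow (x + t • ν) hmem ?_ (frontier_subset_closure htf)
      rw [hinner x hx]
      linarith
  have part2 : {x : EuclideanSpace ℝ (Fin (n+1)) | ⟪x - Q₀, ν⟫ = 0 ∧ ‖x - Q₀‖ < ρ} ⊆
      (fun y => y - ⟪y - Q₀, ν⟫ • ν) '' (frontier Ω ∩ ball Q₀ r) := by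
    rintro x ⟨hx, hxρ⟩
    obtain ⟨t, ht, htf⟩ := part1 x hx hxρ
    refine ⟨x + t • ν, ⟨htf, hball x hx hxρ t (ht.trans (by nlinarith))⟩, ?_⟩
    show (x + t • ν) - ⟪(x + t • ν) - Q₀, ν⟫ • ν = x
    rw [hinner x hx t]
    abel
  refine ⟨part1, part2, ?_⟩
  -- part (iii)
  have hlipπ : LipschitzWith 1 (fun y : EuclideanSpace ℝ (Fin (n+1)) => y - ⟪y - Q₀, ν⟫ • ν) := by
    refine LipschitzWith.of_dist_le_mul fun a b => ?_
    rw [dist_eq_norm, dist_eq_norm, NNReal.coe_one, one_mul]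
    have hab : (a - ⟪a - Q₀, ν⟫ • ν) - (b - ⟪b - Q₀, ν⟫ • ν)
        = (a - b) - ⟪a - b, ν⟫ • ν := by
      rw [show ⟪a - b, ν⟫ = ⟪a - Q₀, ν⟫ - ⟪b - Q₀, ν⟫ by
        rw [← inner_sub_left]; congr 1; abel, sub_smul]
      abel
    rw [hab]
    have h1 : ‖(a - b) - ⟪a - b, ν⟫ • ν‖ ^ 2 = ‖a - b‖ ^ 2 - ⟪a - b, ν⟫ ^ 2 := by
      rw [norm_sub_sq_real, real_inner_smul_right, norm_smul, hν, Real.norm_eq_abs,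
        mul_one, sq_abs]
      ring
    nlinarith [norm_nonneg ((a - b) - ⟪a - b, ν⟫ • ν), norm_nonneg (a - b),
      sq_nonneg (⟪a - b, ν⟫)]
  haveI : Fact (Module.finrank ℝ (EuclideanSpace ℝ (Fin (n+1))) = n + 1) :=
    ⟨finrank_euclideanSpace_fin⟩
  have hν0 : ν ≠ 0 := by intro h; rw [h, norm_zero] at hν; norm_num at hν
  obtain ⟨B, -⟩ : ∃ B : OrthonormalBasis (Fin n) ℝ ((ℝ ∙ ν)ᗮ), True :=
    ⟨OrthonormalBasis.fromOrthogonalSpanSingleton (𝕜 := ℝ) n hν0, trivial⟩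
  obtain ⟨f, hfdef⟩ : ∃ f : EuclideanSpace ℝ (Fin n) → EuclideanSpace ℝ (Fin (n+1)),
      f = fun z => Q₀ + (B.repr.symm z : EuclideanSpace ℝ (Fin (n+1))) := ⟨_, rfl⟩
  have hfiso : Isometry f := by
    refine Isometry.of_dist_eq fun z1 z2 => ?_
    rw [hfdef]
    simp only [dist_eq_norm]
    rw [show Q₀ + (B.repr.symm z1 : EuclideanSpace ℝ (Fin (n+1)))
          - (Q₀ + (B.repr.symm z2 : EuclideanSpace ℝ (Fin (n+1))))
        = ((B.repr.symm z1 - B.repr.symm z2 : (ℝ ∙ ν)ᗮ) : EuclideanSpace ℝ (Fin (n+1))) by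
      push_cast; abel]
    rw [← Submodule.coe_norm, ← map_sub, LinearIsometryEquiv.norm_map]
  have himg : f '' ball 0 ρ ⊆
      {x : EuclideanSpace ℝ (Fin (n+1)) | ⟪x - Q₀, ν⟫ = 0 ∧ ‖x - Q₀‖ < ρ} := by
    rintro _ ⟨z, hz, rfl⟩
    rw [hfdef]
    simp only
    have hsub : Q₀ + (B.repr.symm z : EuclideanSpace ℝ (Fin (n+1))) - Q₀
        = (B.repr.symm z : EuclideanSpace ℝ (Fin (n+1))) := by abel
    constructor
    · have hmem : (B.repr.symm z : EuclideanSpace ℝ (Fin (n+1))) ∈ (ℝ ∙ ν)ᗮ :=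
        (B.repr.symm z).2
      have h0 := hmem ν (Submodule.mem_span_singleton_self ν)
      rw [hsub, real_inner_comm]
      exact h0
    · rw [hsub, ← Submodule.coe_norm, LinearIsometryEquiv.norm_map]
      rwa [mem_ball_zero_iff] at hz
  have hiii : ENNReal.ofReal (ρ ^ n * omegaBall n) ≤ μH[(n:ℝ)] (frontier Ω ∩ ball Q₀ r) := by
    have h1 := aux_ball_vol n hρpos
    have h2 := aux_vol_le_haus n (ball 0 ρ) measurableSet_ball
    have h3 : μH[(n:ℝ)] (ball (0 : EuclideanSpace ℝ (Fin n)) ρ) = μH[(n:ℝ)] (f '' ball 0 ρ) :=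
      (hfiso.hausdorffMeasure_image (Or.inl (by positivity)) _).symm
    have h4 : μH[(n:ℝ)] (f '' ball 0 ρ) ≤
        μH[(n:ℝ)] ((fun y => y - ⟪y - Q₀, ν⟫ • ν) '' (frontier Ω ∩ ball Q₀ r)) :=
      measure_mono (himg.trans part2)
    have h5 := hlipπ.hausdorffMeasure_image_le (d := (n:ℝ)) (by positivity)
      (frontier Ω ∩ ball Q₀ r)
    simp only [ENNReal.coe_one, ENNReal.one_rpow, one_mul] at h5
    exact h1.trans (h2.trans (h3.le.trans (h4.trans h5)))
  have hconst : (1 - 16 * δ ^ 2) ^ ((n : ℝ) / 2) * omegaBall n * r ^ n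
      = ρ ^ n * omegaBall n := by
    have hs : (Real.sqrt (1 - 16 * δ ^ 2)) ^ n = (1 - 16 * δ ^ 2) ^ ((n : ℝ) / 2) := by
      rw [Real.sqrt_eq_rpow, ← Real.rpow_natCast ((1 - 16 * δ ^ 2) ^ ((1:ℝ)/2)) n,
        ← Real.rpow_mul h16.le]
      congr 1
      ring
    rw [hρdef, mul_pow, hs]
    ring
  rw [hconst]
  exact hiii
end
end
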